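/- arXiv:hep-th/0009229 — 7 statements merged into one kernel-verified Lean document; each statement's English description precedes it below -/
import Mathlib

section
/- Let k ≥ 2 and M ≥ 1 be integers with M odd. Let m ∈ ℤ and μ, ρ ∈ {0,…,k−1}, and set λ = (m/k)·Q + u_μ − v_ρ ∈ ℚ^{2k−1}. Then B(λ, λ) = m²/(k(kM+2)) + (μ(k−μ) + ρ(k−ρ))/k; equivalently the conformal dimension Δ(λ) = (1/2)B(λ,λ) equals m²/(2k(kM+2)) + (μ(k−μ)+ρ(k−ρ))/(2k). -/
open Matrix

/-- Entry of the `A_{k-1}` Cartan matrix, with 1-based indices `i, j ∈ {1, …, k-1}`: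
`2` on the diagonal, `-1` for `|i-j| = 1`, `0` otherwise. -/
def cartanEnt (i j : ℕ) : ℤ :=
  if i = j then 2 else if i + 1 = j ∨ j + 1 = i then -1 else 0

/-- Entry `(i, j)` (with `i, j ∈ {0, …, 2k-2}`) of the Gram matrix of the maximally
symmetric lattice `(M+2 | ¹A_{k-1} ¹A_{k-1})`: `G₀₀ = M+2`, `G₀₁ = G₁₀ = 1`,
`G₀ₖ = Gₖ₀ = -1`, the A-block `{1,…,k-1}` and B-block `{k,…,2k-2}` are two copies
of the `A_{k-1}` Cartan matrix, and all other entries vanish. -/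
def gramEnt (k M i j : ℕ) : ℤ :=
  if i = 0 ∧ j = 0 then (M : ℤ) + 2
  else if (i = 0 ∧ j = 1) ∨ (i = 1 ∧ j = 0) then 1
  else if (i = 0 ∧ j = k) ∨ (i = k ∧ j = 0) then -1
  else if i = 0 ∨ j = 0 then 0
  else if i < k ∧ j < k then cartanEnt i j
  else if k ≤ i ∧ k ≤ j then cartanEnt (i - (k - 1)) (j - (k - 1))
  else 0

/-- The Gram matrix `G` as a `(2k-1) × (2k-1)` rational matrix. -/
def gramM (k M : ℕ) : Matrix (Fin (2 * k - 1)) (Fin (2 * k - 1)) ℚ :=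
  fun i j => (gramEnt k M i j : ℚ)

/-- The bilinear form `B(x, y) = xᵀ G y` on `ℚ^{2k-1}`. -/
def bform (k M : ℕ) (x y : Fin (2 * k - 1) → ℚ) : ℚ :=
  x ⬝ᵥ (gramM k M).mulVec y

/-- The standard basis vector `e₀`. -/
def e0vec (k : ℕ) : Fin (2 * k - 1) → ℚ := fun i => if (i : ℕ) = 0 then 1 else 0

/-- The charge vector `Q = G⁻¹ e₀`. -/
noncomputable def Qvec (k M : ℕ) : Fin (2 * k - 1) → ℚ := (gramM k M)⁻¹.mulVec (e0vec k)

/-- The vector `u_μ`, supported on the A-block `{1,…,k-1}`, with entries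
`(u_μ)_i = min(μ,i)·(k - max(μ,i))/k`. -/
def uVec (k μ : ℕ) : Fin (2 * k - 1) → ℚ := fun i =>
  if 1 ≤ (i : ℕ) ∧ (i : ℕ) < k then
    (min μ (i : ℕ) : ℚ) * ((k : ℚ) - (max μ (i : ℕ) : ℕ)) / k
  else 0

/-- The vector `v_ρ`, supported on the B-block `{k,…,2k-2}`, with entries
`(v_ρ)_{k-1+i} = min(ρ,i)·(k - max(ρ,i))/k`. -/
def vVec (k ρ : ℕ) : Fin (2 * k - 1) → ℚ := fun i =>
  if k ≤ (i : ℕ) then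
    (min ρ ((i : ℕ) - (k - 1)) : ℚ) * ((k : ℚ) - (max ρ ((i : ℕ) - (k - 1)) : ℕ)) / k
  else 0

/-- The dual-lattice point `λ = (m/k)·Q + u_μ − v_ρ`. -/
noncomputable def lamVec (k M : ℕ) (m : ℤ) (μ ρ : ℕ) : Fin (2 * k - 1) → ℚ := fun i =>
  ((m : ℚ) / k) * Qvec k M i + uVec k μ i - vVec k ρ i



/-! ### Auxiliary machinery for the proof -/

def fq (k μ i : ℕ) : ℚ := (min μ i : ℚ) * ((k : ℚ) - (max μ i : ℕ)) / k

section fqfacts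
variable {k : ℕ}

lemma fq_eq (k μ i : ℕ) : fq k μ i = ((min μ i : ℕ) : ℚ) * ((k : ℚ) - ((max μ i : ℕ) : ℚ)) / k := by
  simp [fq, Nat.cast_min]

lemma fq_zero (μ : ℕ) : fq k μ 0 = 0 := by simp [fq]
lemma fq_zero' (i : ℕ) : fq k 0 i = 0 := by simp [fq]
lemma fq_k (μ : ℕ) (hμ : μ ≤ k - 1) (hk : 2 ≤ k) : fq k μ k = 0 := by
  have h : max μ k = k := by omega
  rw [fq_eq, h]; push_cast; ring
lemma fq_one (μ : ℕ) (h1 : 1 ≤ μ) (hμ : μ ≤ k - 1) : fq k μ 1 = ((k : ℚ) - μ) / k := by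
  have h : min μ 1 = 1 := by omega
  have h' : max μ 1 = μ := by omega
  rw [fq_eq, h, h']; push_cast; ring
lemma fq_diag (μ : ℕ) : fq k μ μ = (μ : ℚ) * ((k : ℚ) - μ) / k := by
  rw [fq_eq, min_self, max_self]

lemma fq_lap (hk : 2 ≤ k) (μ i : ℕ) (hμ : μ ≤ k - 1) (h1 : 1 ≤ i) (h2 : i ≤ k - 1) :
    2 * fq k μ i - fq k μ (i - 1) - fq k μ (i + 1) = if i = μ then 1 else 0 := by
  have hk0 : (k : ℚ) ≠ 0 := by positivity
  obtain ⟨j, rfl⟩ : ∃ j, i = j + 1 := ⟨i - 1, by omega⟩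
  simp only [Nat.add_sub_cancel]
  rcases lt_trichotomy (j + 1) μ with h | h | h
  · rw [if_neg (by omega)]
    have e1 : min μ (j + 1) = j + 1 := by omega
    have e2 : max μ (j + 1) = μ := by omega
    have e3 : min μ j = j := by omega
    have e4 : max μ j = μ := by omega
    have e5 : min μ (j + 1 + 1) = j + 2 := by omega
    have e6 : max μ (j + 1 + 1) = μ := by omega
    rw [fq_eq, fq_eq, fq_eq, e1, e2, e3, e4, e5, e6]
    push_cast
    field_simp
    ring
  · rw [if_pos h]
    subst h
    have e1 : min (j + 1) (j + 1) = j + 1 := by omega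
    have e2 : max (j + 1) (j + 1) = j + 1 := by omega
    have e3 : min (j + 1) j = j := by omega
    have e4 : max (j + 1) j = j + 1 := by omega
    have e5 : min (j + 1) (j + 1 + 1) = j + 1 := by omega
    have e6 : max (j + 1) (j + 1 + 1) = j + 2 := by omega
    rw [fq_eq, fq_eq, fq_eq, e1, e2, e3, e4, e5, e6]
    push_cast
    field_simp
    ring
  · rw [if_neg (by omega)]
    have e1 : min μ (j + 1) = μ := by omega
    have e2 : max μ (j + 1) = j + 1 := by omega
    have e3 : min μ j = μ := by omega
    have e4 : max μ j = j := by omega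
    have e5 : min μ (j + 1 + 1) = μ := by omega
    have e6 : max μ (j + 1 + 1) = j + 2 := by omega
    rw [fq_eq, fq_eq, fq_eq, e1, e2, e3, e4, e5, e6]
    push_cast
    field_simp
    ring
end fqfacts


lemma fq_lap' {k : ℕ} (hk : 2 ≤ k) (μ j : ℕ) (hμ : μ ≤ k - 1) (h2 : j + 1 ≤ k - 1) :
    2 * fq k μ (j + 1) - fq k μ j - fq k μ (j + 1 + 1) = if j + 1 = μ then 1 else 0 := by
  have h := fq_lap hk μ (j + 1) hμ (by omega) h2
  simp only [Nat.add_sub_cancel] at h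
  exact h

lemma sum_delta {n : ℕ} (a : ℕ) (ha : a < n) (c : ℚ) (x : Fin n → ℚ) :
    (∑ l : Fin n, (if (l : ℕ) = a then c else 0) * x l) = c * x ⟨a, ha⟩ := by
  rw [Finset.sum_eq_single (⟨a, ha⟩ : Fin n)]
  · simp
  · intro b _ hb
    rw [if_neg (fun h => hb (Fin.ext h)), zero_mul]
  · simp


lemma sum_delta' {n : ℕ} (a : ℕ) (ha : a < n) (c : ℚ) (x : Fin n → ℚ) :
    (∑ l : Fin n, x l * (if (l : ℕ) = a then c else 0)) = x ⟨a, ha⟩ * c := by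
  rw [Finset.sum_eq_single (⟨a, ha⟩ : Fin n)]
  · simp
  · intro b _ hb
    rw [if_neg (fun h => hb (Fin.ext h)), mul_zero]
  · simp

lemma xeq {n : ℕ} (x : Fin n → ℚ) {a b : ℕ} (hab : a = b) (ha : a < n) :
    x ⟨a, ha⟩ = x ⟨b, hab ▸ ha⟩ := by subst hab; rfl

section rows
variable {k M : ℕ}

set_option maxHeartbeats 1000000 in
lemma gram_row0 (hk : 2 ≤ k) (l : ℕ) :
    ((gramEnt k M 0 l : ℤ) : ℚ) =
      (if l = 0 then (M : ℚ) + 2 else 0) + (if l = 1 then 1 else 0)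
        + (if l = k then (-1 : ℚ) else 0) := by
  unfold gramEnt cartanEnt
  split_ifs <;> first | (exfalso; omega) | (push_cast; ring)

set_option maxHeartbeats 4000000 in
lemma gram_rowA (hk : 2 ≤ k) (i l : ℕ) (h1 : 1 ≤ i) (h2 : i < k) :
    ((gramEnt k M i l : ℤ) : ℚ) =
      (if l = 0 then (if i = 1 then (1 : ℚ) else 0) else 0)
        + (if l = i then (2 : ℚ) else 0)
        + (if l = i - 1 then (if 2 ≤ i then (-1 : ℚ) else 0) else 0)
        + (if l = i + 1 then (if i + 1 < k then (-1 : ℚ) else 0) else 0) := by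
  unfold gramEnt cartanEnt
  split_ifs <;> first | (exfalso; omega) | (push_cast; ring)

set_option maxHeartbeats 4000000 in
lemma gram_rowB (hk : 2 ≤ k) (i l : ℕ) (h1 : k ≤ i) (h2 : i < 2 * k - 1)
    (hl : l < 2 * k - 1) :
    ((gramEnt k M i l : ℤ) : ℚ) =
      (if l = 0 then (if i = k then (-1 : ℚ) else 0) else 0)
        + (if l = i then (2 : ℚ) else 0)
        + (if l = i - 1 then (if k + 1 ≤ i then (-1 : ℚ) else 0) else 0)
        + (if l = i + 1 then (if i + 1 < 2 * k - 1 then (-1 : ℚ) else 0) else 0) := by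
  unfold gramEnt cartanEnt
  split_ifs <;> first | (exfalso; omega) | (push_cast; ring)


lemma mulVec_row0 (hk : 2 ≤ k) (x : Fin (2 * k - 1) → ℚ) :
    (gramM k M).mulVec x ⟨0, by omega⟩ =
      ((M : ℚ) + 2) * x ⟨0, by omega⟩ + 1 * x ⟨1, by omega⟩ + (-1) * x ⟨k, by omega⟩ := by
  show (∑ l : Fin (2 * k - 1), gramM k M ⟨0, by omega⟩ l * x l) = _
  have h : ∀ l : Fin (2 * k - 1), gramM k M ⟨0, by omega⟩ l * x l =
      (if (l : ℕ) = 0 then (M : ℚ) + 2 else 0) * x l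
        + ((if (l : ℕ) = 1 then (1 : ℚ) else 0) * x l
        + (if (l : ℕ) = k then (-1 : ℚ) else 0) * x l) := by
    intro l
    rw [← add_mul, ← add_mul, ← add_assoc]
    show ((gramEnt k M 0 (l : ℕ) : ℤ) : ℚ) * x l = _
    rw [gram_row0 hk]
  rw [Finset.sum_congr rfl (fun l _ => h l), Finset.sum_add_distrib, Finset.sum_add_distrib,
    sum_delta 0 (by omega), sum_delta 1 (by omega), sum_delta k (by omega)]
  ring

lemma mulVec_rowA (hk : 2 ≤ k) (x : Fin (2 * k - 1) → ℚ) (i : ℕ) (h1 : 1 ≤ i) (h2 : i < k) :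
    (gramM k M).mulVec x ⟨i, by omega⟩ =
      (if i = 1 then (1 : ℚ) else 0) * x ⟨0, by omega⟩ + 2 * x ⟨i, by omega⟩
        + (if 2 ≤ i then (-1 : ℚ) else 0) * x ⟨i - 1, by omega⟩
        + (if i + 1 < k then (-1 : ℚ) else 0) * x ⟨i + 1, by omega⟩ := by
  show (∑ l : Fin (2 * k - 1), gramM k M ⟨i, by omega⟩ l * x l) = _
  have h : ∀ l : Fin (2 * k - 1), gramM k M ⟨i, by omega⟩ l * x l =
      (if (l : ℕ) = 0 then (if i = 1 then (1 : ℚ) else 0) else 0) * x l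
        + ((if (l : ℕ) = i then (2 : ℚ) else 0) * x l
        + ((if (l : ℕ) = i - 1 then (if 2 ≤ i then (-1 : ℚ) else 0) else 0) * x l
        + (if (l : ℕ) = i + 1 then (if i + 1 < k then (-1 : ℚ) else 0) else 0) * x l)) := by
    intro l
    rw [← add_mul, ← add_mul, ← add_mul, ← add_assoc, ← add_assoc]
    show ((gramEnt k M i (l : ℕ) : ℤ) : ℚ) * x l = _
    rw [gram_rowA hk i (l : ℕ) h1 h2]
  rw [Finset.sum_congr rfl (fun l _ => h l), Finset.sum_add_distrib, Finset.sum_add_distrib,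
    Finset.sum_add_distrib, sum_delta 0 (by omega), sum_delta i (by omega),
    sum_delta (i - 1) (by omega), sum_delta (i + 1) (by omega)]
  ring

lemma mulVec_rowB (hk : 2 ≤ k) (x : Fin (2 * k - 1) → ℚ) (i : ℕ) (h1 : k ≤ i)
    (h2 : i < 2 * k - 1) :
    (gramM k M).mulVec x ⟨i, by omega⟩ =
      (if i = k then (-1 : ℚ) else 0) * x ⟨0, by omega⟩ + 2 * x ⟨i, by omega⟩
        + (if k + 1 ≤ i then (-1 : ℚ) else 0) * x ⟨i - 1, by omega⟩
        + (if i + 1 < 2 * k - 1 then (-1 : ℚ) else 0) * x ⟨min (i + 1) (2 * k - 2), by omega⟩ := by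
  rcases lt_or_ge (i + 1) (2 * k - 1) with hc | hc
  · show (∑ l : Fin (2 * k - 1), gramM k M ⟨i, by omega⟩ l * x l) = _
    have h : ∀ l : Fin (2 * k - 1), gramM k M ⟨i, by omega⟩ l * x l =
        (if (l : ℕ) = 0 then (if i = k then (-1 : ℚ) else 0) else 0) * x l
          + ((if (l : ℕ) = i then (2 : ℚ) else 0) * x l
          + ((if (l : ℕ) = i - 1 then (if k + 1 ≤ i then (-1 : ℚ) else 0) else 0) * x l
          + (if (l : ℕ) = i + 1 then (if i + 1 < 2 * k - 1 then (-1 : ℚ) else 0) else 0) * x l)) := by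
      intro l
      rw [← add_mul, ← add_mul, ← add_mul, ← add_assoc, ← add_assoc]
      show ((gramEnt k M i (l : ℕ) : ℤ) : ℚ) * x l = _
      rw [gram_rowB hk i (l : ℕ) h1 h2 l.isLt]
    rw [Finset.sum_congr rfl (fun l _ => h l), Finset.sum_add_distrib, Finset.sum_add_distrib,
      Finset.sum_add_distrib, sum_delta 0 (by omega), sum_delta i (by omega),
      sum_delta (i - 1) (by omega), sum_delta (i + 1) (by omega),
      show (⟨min (i + 1) (2 * k - 2), by omega⟩ : Fin (2 * k - 1)) = ⟨i + 1, by omega⟩ from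
        Fin.ext (by simp; omega)]
    ring
  · have hi : i = 2 * k - 2 := by omega
    rw [if_neg (show ¬ i + 1 < 2 * k - 1 by omega), zero_mul, add_zero]
    show (∑ l : Fin (2 * k - 1), gramM k M ⟨i, by omega⟩ l * x l) = _
    have h : ∀ l : Fin (2 * k - 1), gramM k M ⟨i, by omega⟩ l * x l =
        (if (l : ℕ) = 0 then (if i = k then (-1 : ℚ) else 0) else 0) * x l
          + ((if (l : ℕ) = i then (2 : ℚ) else 0) * x l
          + (if (l : ℕ) = i - 1 then (if k + 1 ≤ i then (-1 : ℚ) else 0) else 0) * x l) := by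
      intro l
      rw [← add_mul, ← add_mul, ← add_assoc]
      show ((gramEnt k M i (l : ℕ) : ℤ) : ℚ) * x l = _
      rw [gram_rowB hk i (l : ℕ) h1 h2 l.isLt, if_neg (by omega : ¬ (l : ℕ) = i + 1), add_zero]
    rw [Finset.sum_congr rfl (fun l _ => h l), Finset.sum_add_distrib, Finset.sum_add_distrib,
      sum_delta 0 (by omega), sum_delta i (by omega), sum_delta (i - 1) (by omega)]
    ring

end rows

section evals
variable {k M : ℕ}

lemma rowA_eval (hk : 2 ≤ k) (x : Fin (2 * k - 1) → ℚ) (α e : ℚ) (μ : ℕ) (hμ : μ ≤ k - 1)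
    (h0 : x ⟨0, by omega⟩ = -(α * k))
    (hA : ∀ j, 1 ≤ j → j ≤ k - 1 → ∀ hj : j < 2 * k - 1,
      x ⟨j, hj⟩ = α * ((k : ℚ) - j) + e * fq k μ j)
    (i : ℕ) (h1 : 1 ≤ i) (h2 : i ≤ k - 1) :
    (gramM k M).mulVec x ⟨i, by omega⟩ = e * (if i = μ then 1 else 0) := by
  obtain ⟨j, rfl⟩ : ∃ j, i = j + 1 := ⟨i - 1, by omega⟩
  rw [mulVec_rowA hk x (j + 1) (by omega) (by omega),
    xeq x (show j + 1 - 1 = j by omega), hA (j + 1) (by omega) h2 (by omega)]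
  have hlap := fq_lap' hk μ j hμ h2
  by_cases hj0 : j = 0
  · subst hj0
    rw [if_pos rfl, if_neg (by omega), h0]
    by_cases hc : 0 + 1 + 1 < k
    · rw [if_pos hc, hA (0 + 1 + 1) (by omega) (by omega) (by omega)]
      push_cast
      linear_combination e * hlap + e * fq_zero μ
    · rw [if_neg hc]
      have hfq : fq k μ (0 + 1 + 1) = 0 := by
        rw [show 0 + 1 + 1 = k by omega]; exact fq_k μ hμ hk
      have hjc : (0 : ℚ) + 2 = (k : ℚ) := by
        have h : k = 2 := by omega
        rw [h]; norm_num
      push_cast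
      linear_combination e * hlap + e * fq_zero μ + e * hfq + (-α) * hjc
  · rw [if_neg (by omega), if_pos (by omega), hA j (by omega) (by omega) (by omega)]
    by_cases hc : j + 1 + 1 < k
    · rw [if_pos hc, hA (j + 1 + 1) (by omega) (by omega) (by omega)]
      push_cast
      linear_combination e * hlap
    · rw [if_neg hc]
      have hfq : fq k μ (j + 1 + 1) = 0 := by
        rw [show j + 1 + 1 = k by omega]; exact fq_k μ hμ hk
      have hjc : (j : ℚ) + 2 = (k : ℚ) := by
        exact_mod_cast congrArg (Nat.cast : ℕ → ℚ) (show j + 2 = k by omega)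
      push_cast
      linear_combination e * hlap + e * hfq + (-α) * hjc

lemma rowB_eval (hk : 2 ≤ k) (x : Fin (2 * k - 1) → ℚ) (α e : ℚ) (ρ : ℕ) (hρ : ρ ≤ k - 1)
    (h0 : x ⟨0, by omega⟩ = α * k)
    (hB : ∀ j, 1 ≤ j → j ≤ k - 1 → ∀ hj : k - 1 + j < 2 * k - 1,
      x ⟨k - 1 + j, hj⟩ = α * ((k : ℚ) - j) + e * fq k ρ j)
    (i : ℕ) (h1 : 1 ≤ i) (h2 : i ≤ k - 1) :
    (gramM k M).mulVec x ⟨k - 1 + i, by omega⟩ = e * (if i = ρ then 1 else 0) := by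
  obtain ⟨j, rfl⟩ : ∃ j, i = j + 1 := ⟨i - 1, by omega⟩
  rw [mulVec_rowB hk x (k - 1 + (j + 1)) (by omega) (by omega),
    xeq x (show k - 1 + (j + 1) - 1 = k - 1 + j by omega),
    hB (j + 1) (by omega) h2 (by omega)]
  have hlap := fq_lap' hk ρ j hρ h2
  by_cases hj0 : j = 0
  · subst hj0
    rw [if_pos (by omega), if_neg (by omega), h0]
    by_cases hc : k - 1 + (0 + 1) + 1 < 2 * k - 1
    · rw [if_pos hc, xeq x (show min (k - 1 + (0 + 1) + 1) (2 * k - 2) = k - 1 + (0 + 1 + 1) by omega),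
        hB (0 + 1 + 1) (by omega) (by omega) (by omega)]
      push_cast
      linear_combination e * hlap + e * fq_zero ρ
    · rw [if_neg hc]
      have hfq : fq k ρ (0 + 1 + 1) = 0 := by
        rw [show 0 + 1 + 1 = k by omega]; exact fq_k ρ hρ hk
      have hjc : (0 : ℚ) + 2 = (k : ℚ) := by
        have h : k = 2 := by omega
        rw [h]; norm_num
      push_cast
      linear_combination e * hlap + e * fq_zero ρ + e * hfq + (-α) * hjc
  · rw [if_neg (by omega), if_pos (by omega),
      hB j (by omega) (by omega) (by omega)]
    by_cases hc : k - 1 + (j + 1) + 1 < 2 * k - 1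
    · rw [if_pos hc, xeq x (show min (k - 1 + (j + 1) + 1) (2 * k - 2) = k - 1 + (j + 1 + 1) by omega),
        hB (j + 1 + 1) (by omega) (by omega) (by omega)]
      push_cast
      linear_combination e * hlap
    · rw [if_neg hc]
      have hfq : fq k ρ (j + 1 + 1) = 0 := by
        rw [show j + 1 + 1 = k by omega]; exact fq_k ρ hρ hk
      have hjc : (j : ℚ) + 2 = (k : ℚ) := by
        exact_mod_cast congrArg (Nat.cast : ℕ → ℚ) (show j + 2 = k by omega)
      push_cast
      linear_combination e * hlap + e * hfq + (-α) * hjc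
end evals

/-- entries of the inverse Gram matrix -/
noncomputable def Hent (k M i j : ℕ) : ℚ :=
  if i = 0 ∧ j = 0 then (k : ℚ) / ((k : ℚ) * M + 2)
  else if i = 0 then
    (if j < k then -((k : ℚ) - j) / ((k : ℚ) * M + 2)
     else ((k : ℚ) - ((j - (k - 1) : ℕ) : ℚ)) / ((k : ℚ) * M + 2))
  else if j = 0 then
    (if i < k then -((k : ℚ) - i) / ((k : ℚ) * M + 2)
     else ((k : ℚ) - ((i - (k - 1) : ℕ) : ℚ)) / ((k : ℚ) * M + 2))
  else if i < k ∧ j < k then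
    fq k j i + ((k : ℚ) - i) * ((k : ℚ) - j) / ((k : ℚ) * ((k : ℚ) * M + 2))
  else if k ≤ i ∧ k ≤ j then
    fq k (j - (k - 1)) (i - (k - 1))
      + ((k : ℚ) - ((i - (k - 1) : ℕ) : ℚ)) * ((k : ℚ) - ((j - (k - 1) : ℕ) : ℚ))
          / ((k : ℚ) * ((k : ℚ) * M + 2))
  else if i < k then
    -(((k : ℚ) - i) * ((k : ℚ) - ((j - (k - 1) : ℕ) : ℚ))) / ((k : ℚ) * ((k : ℚ) * M + 2))
  else
    -(((k : ℚ) - ((i - (k - 1) : ℕ) : ℚ)) * ((k : ℚ) - j)) / ((k : ℚ) * ((k : ℚ) * M + 2))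

noncomputable def Hmat (k M : ℕ) : Matrix (Fin (2 * k - 1)) (Fin (2 * k - 1)) ℚ :=
  fun i j => Hent k M i j

section hent
variable {k M i j : ℕ}

lemma Hent00 : Hent k M 0 0 = (k : ℚ) / ((k : ℚ) * M + 2) := by
  unfold Hent; rw [if_pos ⟨rfl, rfl⟩]
lemma Hent0A (h1 : 1 ≤ j) (h2 : j < k) :
    Hent k M 0 j = -((k : ℚ) - j) / ((k : ℚ) * M + 2) := by
  unfold Hent; rw [if_neg (by omega), if_pos rfl, if_pos h2]
lemma Hent0B (hk : 2 ≤ k) (h1 : k ≤ j) :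
    Hent k M 0 j = ((k : ℚ) - ((j - (k - 1) : ℕ) : ℚ)) / ((k : ℚ) * M + 2) := by
  unfold Hent; rw [if_neg (by omega), if_pos rfl, if_neg (by omega)]
lemma HentA0 (h1 : 1 ≤ i) (h2 : i < k) :
    Hent k M i 0 = -((k : ℚ) - i) / ((k : ℚ) * M + 2) := by
  unfold Hent; rw [if_neg (by omega), if_neg (by omega), if_pos rfl, if_pos h2]
lemma HentB0 (hk : 2 ≤ k) (h1 : k ≤ i) :
    Hent k M i 0 = ((k : ℚ) - ((i - (k - 1) : ℕ) : ℚ)) / ((k : ℚ) * M + 2) := by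
  unfold Hent; rw [if_neg (by omega), if_neg (by omega), if_pos rfl, if_neg (by omega)]
lemma HentAA (hi1 : 1 ≤ i) (hi2 : i < k) (hj1 : 1 ≤ j) (hj2 : j < k) :
    Hent k M i j = fq k j i + ((k : ℚ) - i) * ((k : ℚ) - j) / ((k : ℚ) * ((k : ℚ) * M + 2)) := by
  unfold Hent
  rw [if_neg (by omega), if_neg (by omega), if_neg (by omega), if_pos ⟨hi2, hj2⟩]
lemma HentBB (hk : 2 ≤ k) (hi : k ≤ i) (hj : k ≤ j) :
    Hent k M i j = fq k (j - (k - 1)) (i - (k - 1))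
      + ((k : ℚ) - ((i - (k - 1) : ℕ) : ℚ)) * ((k : ℚ) - ((j - (k - 1) : ℕ) : ℚ))
          / ((k : ℚ) * ((k : ℚ) * M + 2)) := by
  unfold Hent
  rw [if_neg (by omega), if_neg (by omega), if_neg (by omega), if_neg (by omega),
    if_pos ⟨hi, hj⟩]
lemma HentAB (hk : 2 ≤ k) (hi1 : 1 ≤ i) (hi2 : i < k) (hj : k ≤ j) :
    Hent k M i j = -(((k : ℚ) - i) * ((k : ℚ) - ((j - (k - 1) : ℕ) : ℚ)))
      / ((k : ℚ) * ((k : ℚ) * M + 2)) := by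
  unfold Hent
  rw [if_neg (by omega), if_neg (by omega), if_neg (by omega), if_neg (by omega),
    if_neg (by omega), if_pos hi2]
lemma HentBA (hk : 2 ≤ k) (hi : k ≤ i) (hj1 : 1 ≤ j) (hj2 : j < k) :
    Hent k M i j = -(((k : ℚ) - ((i - (k - 1) : ℕ) : ℚ)) * ((k : ℚ) - j))
      / ((k : ℚ) * ((k : ℚ) * M + 2)) := by
  unfold Hent
  rw [if_neg (by omega), if_neg (by omega), if_neg (by omega), if_neg (by omega),
    if_neg (by omega), if_neg (by omega)]
end hent

section gh
variable {k M : ℕ}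

lemma GH (hk : 2 ≤ k) : gramM k M * Hmat k M = 1 := by
  have hk0 : (k : ℚ) ≠ 0 := by positivity
  have hS : (k : ℚ) * M + 2 ≠ 0 := by positivity
  ext ⟨iv, hiv⟩ ⟨jv, hjv⟩
  rw [Matrix.mul_apply]
  have hone : (1 : Matrix (Fin (2 * k - 1)) (Fin (2 * k - 1)) ℚ) ⟨iv, hiv⟩ ⟨jv, hjv⟩
      = if iv = jv then 1 else 0 := by
    rw [Matrix.one_apply]
    by_cases h : iv = jv
    · rw [if_pos (Fin.ext h), if_pos h]
    · rw [if_neg (fun hh => h (by exact congrArg Fin.val hh)), if_neg h]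
  rw [hone]
  show (gramM k M).mulVec (fun l => Hent k M (l : ℕ) jv) ⟨iv, hiv⟩ = _
  set y : Fin (2 * k - 1) → ℚ := fun l => Hent k M (l : ℕ) jv with hy
  -- case on the column type
  rcases show jv = 0 ∨ (1 ≤ jv ∧ jv < k) ∨ k ≤ jv by omega with hj | hj | hj
  · -- column 0
    subst hj
    have h0 : y ⟨0, by omega⟩ = -((-(1 / ((k : ℚ) * M + 2))) * k) := by
      show Hent k M 0 0 = _; rw [Hent00]; field_simp; try ring
    have h0' : y ⟨0, by omega⟩ = (1 / ((k : ℚ) * M + 2)) * k := by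
      show Hent k M 0 0 = _; rw [Hent00]; field_simp; try ring
    have hA : ∀ j, 1 ≤ j → j ≤ k - 1 → ∀ hj : j < 2 * k - 1,
        y ⟨j, hj⟩ = (-(1 / ((k : ℚ) * M + 2))) * ((k : ℚ) - j) + 0 * fq k 0 j := by
      intro j h1 h2 hj
      show Hent k M j 0 = _; rw [HentA0 h1 (by omega)]; field_simp; try ring
    have hB : ∀ j, 1 ≤ j → j ≤ k - 1 → ∀ hj : k - 1 + j < 2 * k - 1,
        y ⟨k - 1 + j, hj⟩ = (1 / ((k : ℚ) * M + 2)) * ((k : ℚ) - j) + 0 * fq k 0 j := by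
      intro j h1 h2 hj
      show Hent k M (k - 1 + j) 0 = _
      rw [HentB0 hk (by omega), show k - 1 + j - (k - 1) = j by omega]; field_simp; try ring
    rcases show iv = 0 ∨ (1 ≤ iv ∧ iv ≤ k - 1) ∨ k ≤ iv by omega with hi | hi | hi
    · subst hi
      rw [if_pos rfl, mulVec_row0 hk y, h0', hA 1 (by omega) (by omega) (by omega),
        xeq y (show k = k - 1 + 1 by omega), hB 1 (by omega) (by omega) (by omega)]
      push_cast
      field_simp
      ring
    · rw [if_neg (by omega)]
      have := rowA_eval (M := M) hk y (-(1 / ((k : ℚ) * M + 2))) 0 0 (by omega) h0 hA iv hi.1 hi.2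
      rw [this, if_neg (by omega), mul_zero]
    · rw [if_neg (by omega)]
      have h2 := rowB_eval (M := M) hk y (1 / ((k : ℚ) * M + 2)) 0 0 (by omega) h0' hB
        (iv - (k - 1)) (by omega) (by omega)
      rw [show (⟨iv, hiv⟩ : Fin (2 * k - 1)) = ⟨k - 1 + (iv - (k - 1)), by omega⟩ from
        Fin.ext (by simp; omega), h2, if_neg (by omega), mul_zero]
  · -- column in the A block
    obtain ⟨hj1, hj2⟩ := hj
    have h0 : y ⟨0, by omega⟩ = -((((k : ℚ) - jv) / ((k : ℚ) * ((k : ℚ) * M + 2))) * k) := by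
      show Hent k M 0 jv = _; rw [Hent0A hj1 hj2]; field_simp; try ring
    have h0' : y ⟨0, by omega⟩ = (-(((k : ℚ) - jv) / ((k : ℚ) * ((k : ℚ) * M + 2)))) * k := by
      rw [h0]; ring
    have hA : ∀ j, 1 ≤ j → j ≤ k - 1 → ∀ hj : j < 2 * k - 1,
        y ⟨j, hj⟩ = (((k : ℚ) - jv) / ((k : ℚ) * ((k : ℚ) * M + 2))) * ((k : ℚ) - j)
          + 1 * fq k jv j := by
      intro j h1 h2 hj
      show Hent k M j jv = _; rw [HentAA h1 (by omega) hj1 hj2]; field_simp; ring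
    have hB : ∀ j, 1 ≤ j → j ≤ k - 1 → ∀ hj : k - 1 + j < 2 * k - 1,
        y ⟨k - 1 + j, hj⟩ = (-(((k : ℚ) - jv) / ((k : ℚ) * ((k : ℚ) * M + 2)))) * ((k : ℚ) - j)
          + 0 * fq k 0 j := by
      intro j h1 h2 hj
      show Hent k M (k - 1 + j) jv = _
      rw [HentBA hk (by omega) hj1 hj2, show k - 1 + j - (k - 1) = j by omega]; field_simp; ring
    rcases show iv = 0 ∨ (1 ≤ iv ∧ iv ≤ k - 1) ∨ k ≤ iv by omega with hi | hi | hi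
    · subst hi
      rw [if_neg (by omega), mulVec_row0 hk y, h0, hA 1 (by omega) (by omega) (by omega),
        xeq y (show k = k - 1 + 1 by omega), hB 1 (by omega) (by omega) (by omega),
        fq_one jv hj1 (by omega)]
      field_simp
      ring
    · have := rowA_eval (M := M) hk y (((k : ℚ) - jv) / ((k : ℚ) * ((k : ℚ) * M + 2))) 1 jv
        (by omega) h0 hA iv hi.1 hi.2
      rw [this, one_mul]
    · rw [if_neg (by omega)]
      have h2 := rowB_eval (M := M) hk y (-(((k : ℚ) - jv) / ((k : ℚ) * ((k : ℚ) * M + 2)))) 0 0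
        (by omega) h0' hB (iv - (k - 1)) (by omega) (by omega)
      rw [show (⟨iv, hiv⟩ : Fin (2 * k - 1)) = ⟨k - 1 + (iv - (k - 1)), by omega⟩ from
        Fin.ext (by simp; omega), h2, if_neg (by omega), mul_zero]
  · -- column in the B block
    have hjB : k ≤ jv := hj
    have hjv1 : 1 ≤ jv - (k - 1) := by omega
    have hjv2 : jv - (k - 1) ≤ k - 1 := by omega
    have h0 : y ⟨0, by omega⟩
        = -((-(((k : ℚ) - ((jv - (k - 1) : ℕ) : ℚ)) / ((k : ℚ) * ((k : ℚ) * M + 2)))) * k) := by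
      show Hent k M 0 jv = _; rw [Hent0B hk hj]; field_simp; try ring
    have h0' : y ⟨0, by omega⟩
        = ((((k : ℚ) - ((jv - (k - 1) : ℕ) : ℚ)) / ((k : ℚ) * ((k : ℚ) * M + 2)))) * k := by
      rw [h0]; ring
    have hA : ∀ j, 1 ≤ j → j ≤ k - 1 → ∀ hj : j < 2 * k - 1,
        y ⟨j, hj⟩ = (-(((k : ℚ) - ((jv - (k - 1) : ℕ) : ℚ)) / ((k : ℚ) * ((k : ℚ) * M + 2))))
            * ((k : ℚ) - j) + 0 * fq k 0 j := by
      intro j h1 h2 hj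
      show Hent k M j jv = _; rw [HentAB hk h1 (by omega) hjB]; field_simp; ring
    have hB : ∀ j, 1 ≤ j → j ≤ k - 1 → ∀ hj : k - 1 + j < 2 * k - 1,
        y ⟨k - 1 + j, hj⟩ = ((((k : ℚ) - ((jv - (k - 1) : ℕ) : ℚ))
            / ((k : ℚ) * ((k : ℚ) * M + 2)))) * ((k : ℚ) - j)
          + 1 * fq k (jv - (k - 1)) j := by
      intro j h1 h2 hj
      show Hent k M (k - 1 + j) jv = _
      rw [HentBB hk (by omega) hjB, show k - 1 + j - (k - 1) = j by omega]; field_simp; ring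
    rcases show iv = 0 ∨ (1 ≤ iv ∧ iv ≤ k - 1) ∨ k ≤ iv by omega with hi | hi | hi
    · subst hi
      rw [if_neg (by omega), mulVec_row0 hk y, h0', hA 1 (by omega) (by omega) (by omega),
        xeq y (show k = k - 1 + 1 by omega), hB 1 (by omega) (by omega) (by omega),
        fq_one (jv - (k - 1)) hjv1 hjv2]
      field_simp
      ring
    · rw [if_neg (by omega)]
      have := rowA_eval (M := M) hk y
        (-(((k : ℚ) - ((jv - (k - 1) : ℕ) : ℚ)) / ((k : ℚ) * ((k : ℚ) * M + 2)))) 0 0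
        (by omega) h0 hA iv hi.1 hi.2
      rw [this, if_neg (by omega), mul_zero]
    · have h2 := rowB_eval (M := M) hk y
        ((((k : ℚ) - ((jv - (k - 1) : ℕ) : ℚ)) / ((k : ℚ) * ((k : ℚ) * M + 2)))) 1
        (jv - (k - 1)) (by omega) h0' hB (iv - (k - 1)) (by omega) (by omega)
      rw [show (⟨iv, hiv⟩ : Fin (2 * k - 1)) = ⟨k - 1 + (iv - (k - 1)), by omega⟩ from
        Fin.ext (by simp; omega), h2, one_mul]
      by_cases hij : iv = jv
      · rw [if_pos (by omega), if_pos hij]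
      · rw [if_neg (by omega), if_neg hij]
end gh

section vecevals
variable {k μ ρ : ℕ}

lemma uVec_evalA (a : ℕ) (ha : a < 2 * k - 1) (h1 : 1 ≤ a) (h2 : a < k) :
    uVec k μ ⟨a, ha⟩ = fq k μ a := by
  show (if 1 ≤ a ∧ a < k then _ else (0 : ℚ)) = _
  rw [if_pos ⟨h1, h2⟩]
  rfl

lemma uVec_eval0 (a : ℕ) (ha : a < 2 * k - 1) (h : ¬(1 ≤ a ∧ a < k)) :
    uVec k μ ⟨a, ha⟩ = 0 := by
  show (if 1 ≤ a ∧ a < k then _ else (0 : ℚ)) = _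
  rw [if_neg h]

lemma vVec_evalB (hk : 2 ≤ k) (a : ℕ) (ha : a < 2 * k - 1) (hka : k ≤ a) :
    vVec k ρ ⟨a, ha⟩ = fq k ρ (a - (k - 1)) := by
  show (if k ≤ a then _ else (0 : ℚ)) = _
  rw [if_pos hka]
  show min (ρ : ℚ) ((a : ℚ) - ((k : ℚ) - 1)) * ((k : ℚ) - (max ρ (a - (k - 1)) : ℕ)) / k = _
  rw [show (a : ℚ) - ((k : ℚ) - 1) = ((a - (k - 1) : ℕ) : ℚ) by
    rw [Nat.cast_sub (by omega)]; push_cast [Nat.cast_sub (show 1 ≤ k by omega)]; ring]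
  rfl

lemma vVec_eval0 (a : ℕ) (ha : a < 2 * k - 1) (h : ¬ k ≤ a) :
    vVec k ρ ⟨a, ha⟩ = 0 := by
  show (if k ≤ a then _ else (0 : ℚ)) = _
  rw [if_neg h]
end vecevals

/-- **Conformal dimension of the excitation `λ`.** For `k ≥ 2`, `M ≥ 1` odd, `m ∈ ℤ`
and `μ, ρ ∈ {0,…,k-1}`, the vector `λ = (m/k)·Q + u_μ − v_ρ` has squared length
`B(λ,λ) = m²/(k(kM+2)) + (μ(k−μ) + ρ(k−ρ))/k`; equivalently its conformal
dimension `Δ(λ) = B(λ,λ)/2` equals `m²/(2k(kM+2)) + (μ(k−μ)+ρ(k−ρ))/(2k)`. -/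
theorem conformal_dimension (k M : ℕ) (hk : 2 ≤ k) (hM : 1 ≤ M) (hModd : Odd M)
    (m : ℤ) (μ ρ : ℕ) (hμ : μ ≤ k - 1) (hρ : ρ ≤ k - 1) :
    bform k M (lamVec k M m μ ρ) (lamVec k M m μ ρ) =
        (m : ℚ) ^ 2 / ((k : ℚ) * ((k : ℚ) * M + 2)) +
          ((μ : ℚ) * ((k : ℚ) - μ) + (ρ : ℚ) * ((k : ℚ) - ρ)) / k ∧
      (1 / 2 : ℚ) * bform k M (lamVec k M m μ ρ) (lamVec k M m μ ρ) =
        (m : ℚ) ^ 2 / (2 * (k : ℚ) * ((k : ℚ) * M + 2)) +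
          ((μ : ℚ) * ((k : ℚ) - μ) + (ρ : ℚ) * ((k : ℚ) - ρ)) / (2 * k) := by
  have hk0 : (k : ℚ) ≠ 0 := by positivity
  have hS : (k : ℚ) * M + 2 ≠ 0 := by positivity
  have hGinv : (gramM k M)⁻¹ = Hmat k M := Matrix.inv_eq_right_inv (GH hk)
  -- entries of Q
  have hQ : ∀ i : Fin (2 * k - 1), Qvec k M i = Hent k M (i : ℕ) 0 := by
    intro i
    show (gramM k M)⁻¹.mulVec (e0vec k) i = _
    rw [hGinv]
    show (∑ l : Fin (2 * k - 1), Hent k M (i : ℕ) (l : ℕ)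
      * (if (l : ℕ) = 0 then (1 : ℚ) else 0)) = _
    rw [sum_delta' 0 (by omega) 1 (fun l => Hent k M (i : ℕ) (l : ℕ)), mul_one]
  set lam := lamVec k M m μ ρ with hlam
  -- entries of λ
  have hl0 : lam ⟨0, by omega⟩ = (m : ℚ) / k * ((k : ℚ) / ((k : ℚ) * M + 2)) := by
    show (m : ℚ) / k * Qvec k M ⟨0, by omega⟩ + uVec k μ ⟨0, by omega⟩
        - vVec k ρ ⟨0, by omega⟩ = _
    rw [hQ, uVec_eval0 0 (by omega) (by omega), vVec_eval0 0 (by omega) (by omega)]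
    show _ * Hent k M 0 0 + 0 - 0 = _
    rw [Hent00]
    ring
  have hlA : ∀ j, 1 ≤ j → j ≤ k - 1 → ∀ hj : j < 2 * k - 1,
      lam ⟨j, hj⟩ = (-((m : ℚ) / ((k : ℚ) * ((k : ℚ) * M + 2)))) * ((k : ℚ) - j)
        + 1 * fq k μ j := by
    intro j h1 h2 hj
    show (m : ℚ) / k * Qvec k M ⟨j, hj⟩ + uVec k μ ⟨j, hj⟩ - vVec k ρ ⟨j, hj⟩ = _
    rw [hQ, uVec_evalA j hj h1 (by omega), vVec_eval0 j hj (by omega)]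
    show _ * Hent k M j 0 + _ - 0 = _
    rw [HentA0 h1 (by omega)]
    field_simp
    ring
  have hlB : ∀ j, 1 ≤ j → j ≤ k - 1 → ∀ hj : k - 1 + j < 2 * k - 1,
      lam ⟨k - 1 + j, hj⟩ = ((m : ℚ) / ((k : ℚ) * ((k : ℚ) * M + 2))) * ((k : ℚ) - j)
        + (-1) * fq k ρ j := by
    intro j h1 h2 hj
    show (m : ℚ) / k * Qvec k M ⟨k - 1 + j, hj⟩ + uVec k μ ⟨k - 1 + j, hj⟩
        - vVec k ρ ⟨k - 1 + j, hj⟩ = _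
    rw [hQ, uVec_eval0 (k - 1 + j) hj (by omega), vVec_evalB hk (k - 1 + j) hj (by omega),
      show k - 1 + j - (k - 1) = j by omega]
    show _ * Hent k M (k - 1 + j) 0 + 0 - fq k ρ j = _
    rw [HentB0 hk (by omega), show k - 1 + j - (k - 1) = j by omega]
    field_simp
    ring
  -- the vector G·λ
  have hw : ∀ i : Fin (2 * k - 1), (gramM k M).mulVec lam i =
      (if (i : ℕ) = 0 then (m : ℚ) / k + fq k μ 1 + fq k ρ 1 else 0)
      + ((if (i : ℕ) = max μ 1 then (if 1 ≤ μ then (1 : ℚ) else 0) else 0)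
      + (if (i : ℕ) = k - 1 + max ρ 1 then (if 1 ≤ ρ then (-1 : ℚ) else 0) else 0)) := by
    rintro ⟨iv, hiv⟩
    rcases show iv = 0 ∨ (1 ≤ iv ∧ iv ≤ k - 1) ∨ k ≤ iv by omega with hi | hi | hi
    · subst hi
      rw [mulVec_row0 hk lam, hl0, hlA 1 (by omega) (by omega) (by omega),
        xeq lam (show k = k - 1 + 1 by omega), hlB 1 (by omega) (by omega) (by omega)]
      show _ = (if (0 : ℕ) = 0 then _ else _)
        + ((if (0 : ℕ) = max μ 1 then _ else _) + (if (0 : ℕ) = k - 1 + max ρ 1 then _ else _))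
      rw [if_pos rfl, if_neg (show (0 : ℕ) ≠ max μ 1 by omega),
        if_neg (show (0 : ℕ) ≠ k - 1 + max ρ 1 by omega)]
      field_simp
      ring
    · have hA := rowA_eval (M := M) hk lam (-((m : ℚ) / ((k : ℚ) * ((k : ℚ) * M + 2)))) 1 μ hμ
        (by rw [hl0]; field_simp) hlA iv hi.1 hi.2
      rw [hA, one_mul]
      show _ = (if iv = 0 then _ else _)
        + ((if iv = max μ 1 then _ else _) + (if iv = k - 1 + max ρ 1 then _ else _))
      rw [if_neg (show iv ≠ 0 by omega), if_neg (show iv ≠ k - 1 + max ρ 1 by omega),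
        zero_add, add_zero]
      by_cases hμ1 : 1 ≤ μ
      · rw [show max μ 1 = μ by omega, if_pos hμ1]
      · rw [if_neg hμ1, show (if iv = max μ 1 then (0 : ℚ) else 0) = 0 by simp,
          if_neg (show iv ≠ μ by omega)]
    · have hB := rowB_eval (M := M) hk lam ((m : ℚ) / ((k : ℚ) * ((k : ℚ) * M + 2))) (-1) ρ hρ
        (by rw [hl0]; field_simp) hlB (iv - (k - 1)) (by omega) (by omega)
      rw [show (⟨iv, hiv⟩ : Fin (2 * k - 1)) = ⟨k - 1 + (iv - (k - 1)), by omega⟩ from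
        Fin.ext (by simp; omega), hB]
      show _ = (if k - 1 + (iv - (k - 1)) = 0 then _ else _)
        + ((if k - 1 + (iv - (k - 1)) = max μ 1 then _ else _)
          + (if k - 1 + (iv - (k - 1)) = k - 1 + max ρ 1 then _ else _))
      rw [if_neg (show k - 1 + (iv - (k - 1)) ≠ 0 by omega),
        if_neg (show k - 1 + (iv - (k - 1)) ≠ max μ 1 by omega), zero_add, zero_add]
      by_cases hρ1 : 1 ≤ ρ
      · rw [if_pos hρ1]
        by_cases he : iv - (k - 1) = ρ
        · rw [if_pos he, if_pos (show k - 1 + (iv - (k - 1)) = k - 1 + max ρ 1 by omega)]; ring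
        · rw [if_neg he, if_neg (show k - 1 + (iv - (k - 1)) ≠ k - 1 + max ρ 1 by omega)]; ring
      · rw [if_neg hρ1,
          show (if k - 1 + (iv - (k - 1)) = k - 1 + max ρ 1 then (0 : ℚ) else 0) = 0 by simp,
          if_neg (show iv - (k - 1) ≠ ρ by omega)]
        ring
  -- the quadratic form
  have hbf : bform k M lam lam = (m : ℚ) ^ 2 / ((k : ℚ) * ((k : ℚ) * M + 2)) +
      ((μ : ℚ) * ((k : ℚ) - μ) + (ρ : ℚ) * ((k : ℚ) - ρ)) / k := by
    show (∑ i : Fin (2 * k - 1), lam i * (gramM k M).mulVec lam i) = _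
    rw [Finset.sum_congr rfl (fun i _ => by rw [hw i])]
    simp only [mul_add]
    rw [Finset.sum_add_distrib, Finset.sum_add_distrib,
      sum_delta' 0 (by omega) _ lam, sum_delta' (max μ 1) (by omega) _ lam,
      sum_delta' (k - 1 + max ρ 1) (by omega) _ lam, hl0]
    by_cases hμ1 : 1 ≤ μ
    · rw [if_pos hμ1, xeq lam (show max μ 1 = μ by omega),
        hlA μ hμ1 hμ (by omega), fq_one μ hμ1 hμ, fq_diag μ]
      by_cases hρ1 : 1 ≤ ρ
      · rw [if_pos hρ1, xeq lam (show k - 1 + max ρ 1 = k - 1 + ρ by omega),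
          hlB ρ hρ1 hρ (by omega), fq_one ρ hρ1 hρ, fq_diag ρ]
        field_simp
        ring
      · have : ρ = 0 := by omega
        subst this
        simp only [show ¬(1 ≤ 0) by omega, if_false, mul_zero, add_zero, fq_zero' 1]
        push_cast
        field_simp
        ring
    · have : μ = 0 := by omega
      subst this
      simp only [show ¬(1 ≤ 0) by omega, if_false, mul_zero, zero_add, add_zero, fq_zero' 1]
      by_cases hρ1 : 1 ≤ ρ
      · rw [if_pos hρ1, xeq lam (show k - 1 + max ρ 1 = k - 1 + ρ by omega),
          hlB ρ hρ1 hρ (by omega), fq_one ρ hρ1 hρ, fq_diag ρ]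
        push_cast
        field_simp
        ring
      · have : ρ = 0 := by omega
        subst this
        simp only [show ¬(1 ≤ 0) by omega, if_false, mul_zero, add_zero, fq_zero' 1]
        push_cast
        field_simp
        ring
  refine ⟨hbf, ?_⟩
  rw [hbf]
  field_simp
end

section
/- Let k ≥ 1 be an integer and let T be the set of admissible triples (α, β, {μ, ρ}) with α, β ∈ ℤ/kℤ and {μ,ρ} an unordered pair of elements of ℤ/kℤ satisfying α + β = μ + ρ in ℤ/kℤ. The ℤ/kℤ-action σ·(α, β, {μ, ρ}) = (α+σ, β+σ, {μ+σ, ρ+σ}) maps T to itself, is free on T, and the number of its orbits equals k(k+1)/2 (equivalently, twice the number of orbits equals k(k+1)). In particular the number of equivalence classes of admissible triples equals the number k(k+1)/2 of level-2 weights. -/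
/-- A triple consisting of two `ℤ/kℤ` labels (the two level-1 fundamental weights)
and an unordered pair of `ℤ/kℤ` labels (the level-2 weight). -/
abbrev CosetTriple (k : ℕ) := ZMod k × ZMod k × Sym2 (ZMod k)

/-- The ℤ_k charge `μ + ρ` of an unordered pair `{μ, ρ}`. -/
def pairSum (k : ℕ) : Sym2 (ZMod k) → ZMod k :=
  Sym2.lift ⟨fun a b => a + b, fun a b => add_comm a b⟩

/-- The set of admissible triples: those obeying the ℤ_k charge conservation
`α + β = μ + ρ` in `ℤ/kℤ`. -/
def Admissible (k : ℕ) : Set (CosetTriple k) :=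
  {t | t.1 + t.2.1 = pairSum k t.2.2}

/-- The diagonal shift action `σ·(α, β, {μ, ρ}) = (α+σ, β+σ, {μ+σ, ρ+σ})`. -/
def shiftTriple (k : ℕ) (σ : ZMod k) (t : CosetTriple k) : CosetTriple k :=
  (t.1 + σ, t.2.1 + σ, t.2.2.map (· + σ))

lemma pairSum_map (k : ℕ) (σ : ZMod k) (p : Sym2 (ZMod k)) :
    pairSum k (p.map (· + σ)) = pairSum k p + σ + σ := by
  induction p using Sym2.ind with
  | _ a b => simp [pairSum]; ring


/-- orbit invariant -/
def inv (k : ℕ) (t : CosetTriple k) : Sym2 (ZMod k) := t.2.2.map (fun x => x - t.1)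

lemma inv_shift (k : ℕ) (σ : ZMod k) (t : CosetTriple k) :
    inv k (shiftTriple k σ t) = inv k t := by
  unfold inv shiftTriple
  simp only [Sym2.map_map]
  congr 1; funext x; simp [Function.comp]

/-- **Field identification by simple currents.** For `k ≥ 1`, the diagonal
`ℤ/kℤ`-shift action maps the set of admissible triples to itself, is free on it,
and has exactly `k(k+1)/2` orbits (twice the number of orbits is `k(k+1)`):
the equivalence classes of admissible triples are in bijection with the level-2
weights. -/
theorem shift_action_on_admissible (k : ℕ) (hk : 1 ≤ k) :
    (∀ t ∈ Admissible k, ∀ σ : ZMod k, shiftTriple k σ t ∈ Admissible k) ∧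
      (∀ t ∈ Admissible k, ∀ σ : ZMod k, shiftTriple k σ t = t → σ = 0) ∧
      2 * Nat.card
          (Quot fun a b : Admissible k => ∃ σ : ZMod k, shiftTriple k σ a.1 = b.1) =
        k * (k + 1) := by
  refine ⟨?_, ?_, ?_⟩
  · intro t ht σ
    simp only [Admissible, Set.mem_setOf_eq, shiftTriple, pairSum_map] at *
    rw [← ht]; ring
  · intro t _ σ h
    have : t.1 + σ = t.1 := congrArg Prod.fst h
    simpa using this
  · haveI : NeZero k := ⟨by omega⟩
    -- bijection between quotient and Sym2 (ZMod k)
    set R := fun a b : Admissible k => ∃ σ : ZMod k, shiftTriple k σ a.1 = b.1 with hR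
    let F : Quot R → Sym2 (ZMod k) :=
      Quot.lift (fun t => inv k t.1) (by
        rintro a b ⟨σ, hσ⟩
        simp only [← hσ, inv_shift])
    have hbij : Function.Bijective F := by
      constructor
      · rintro ⟨a⟩ ⟨b⟩ hab
        apply Quot.sound
        obtain ⟨a, ha⟩ := a
        obtain ⟨b, hb⟩ := b
        simp only [F, inv] at hab
        refine ⟨b.1 - a.1, ?_⟩
        have hpair : a.2.2.map (· + (b.1 - a.1)) = b.2.2 := by
          have h := congrArg (Sym2.map (· + b.1)) hab
          simp only [Sym2.map_map] at h
          have e1 : ((fun x => x + b.1) ∘ fun x : ZMod k => x - a.1) = (· + (b.1 - a.1)) := by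
            funext x; simp [Function.comp]; ring
          have e2 : ((fun x => x + b.1) ∘ fun x : ZMod k => x - b.1) = id := by
            funext x; simp [Function.comp]
          rw [e1, e2, Sym2.map_id] at h
          exact h
        have hps : pairSum k b.2.2 = pairSum k a.2.2 + (b.1 - a.1) + (b.1 - a.1) := by
          rw [← hpair, pairSum_map]
        simp only [Admissible, Set.mem_setOf_eq] at ha hb
        have hβ : a.2.1 + (b.1 - a.1) = b.2.1 := by
          have h1 : a.2.1 = pairSum k a.2.2 - a.1 := by rw [← ha]; ring
          have h2 : b.2.1 = pairSum k b.2.2 - b.1 := by rw [← hb]; ring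
          rw [h1, h2, hps]; ring
        simp only [shiftTriple, hpair, hβ]
        exact Prod.ext (by ring) (Prod.ext rfl rfl)
      · intro p
        refine ⟨Quot.mk _ ⟨(0, pairSum k p, p), ?_⟩, ?_⟩
        · simp [Admissible]
        · simp [F, inv]
    have : Nat.card (Quot R) = Nat.card (Sym2 (ZMod k)) := Nat.card_eq_of_bijective F hbij
    rw [this]
    have : Nat.card (Sym2 (ZMod k)) = (k + 1).choose 2 := by
      rw [Nat.card_eq_fintype_card, Sym2.card, ZMod.card]
    rw [this, Nat.choose_two_right]
    simp only [Nat.add_sub_cancel]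
    rw [Nat.mul_comm (k+1) k]
    exact Nat.mul_div_cancel' (even_iff_two_dvd.mp (Nat.even_mul_succ_self k))
end

section
/- Let k ≥ 1 and M ≥ 1 be integers with M odd. Twice the cardinality of the set {(m, μ, ρ) : 0 ≤ m < kM+2, 0 ≤ μ ≤ ρ ≤ k−1, μ + ρ ≡ m (mod k)} equals (k+1)(kM+2). (This is the topological order N_k = (k+1)(kM+2)/2 of the ℤ_k-parafermion Hall state.) -/
/-!
For a fixed charge `m`, twice the number of unordered pairs `μ ≤ ρ` with `μ + ρ ≡ m (mod k)` is
the number `k` of ordered such pairs plus the number of diagonal solutions `2μ ≡ m`. Summed over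
the `kM + 2` charges, the diagonal solutions contribute `M` per `μ` on the first `kM` charges, and
the last two charges `m ≡ 0, 1` add exactly two more: `2μ ≡ 0` and `2μ ≡ 1` have two solutions
in total (`0` and `(k + 1) / 2` when `k ≥ 2`). Hence twice the count is `k(kM + 2) + (kM + 2)`.
-/

open Finset

namespace Nat

lemma card_filter_modEq_Ico_add_mul {r : ℕ} (hr : 0 < r) (a n v : ℕ) :
    #{x ∈ Ico a (a + r * n) | x ≡ v [MOD r]} = n := by
  have h := Nat.Ico_filter_modEq_card a (a + r * n) hr v
  have hshift : ((a + r * n : ℕ) - (v : ℚ)) / r = (a - v) / r + n := by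
    push_cast; field_simp; ring
  rw [hshift, Int.ceil_add_natCast, add_sub_cancel_left, max_eq_left (by positivity)] at h
  exact_mod_cast h

lemma card_filter_range_mul_modEq {r : ℕ} (hr : 0 < r) (n v : ℕ) :
    #{x ∈ range (r * n) | x ≡ v [MOD r]} = n := by
  rw [range_eq_Ico, ← zero_add (r * n)]
  exact card_filter_modEq_Ico_add_mul hr 0 n v

lemma card_filter_range_add_modEq {r : ℕ} (hr : 0 < r) (a v : ℕ) :
    #{x ∈ range r | a + x ≡ v [MOD r]} = 1 := by
  calc #{x ∈ range r | a + x ≡ v [MOD r]}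
      = #({x ∈ range r | a + x ≡ v [MOD r]}.map (addLeftEmbedding a)) := (card_map _).symm
    _ = #{y ∈ (range r).map (addLeftEmbedding a) | y ≡ v [MOD r]} := by rw [filter_map]; rfl
    _ = 1 := by
      rw [range_eq_Ico, map_add_left_Ico, add_zero]
      simpa using card_filter_modEq_Ico_add_mul hr a 1 v

end Nat

namespace Finset

lemma card_filter_product_eq_sum {α β : Type*} (s : Finset α) (t : Finset β)
    (p : α × β → Prop) [DecidablePred p] :
    #{x ∈ s ×ˢ t | p x} = ∑ a ∈ s, #{b ∈ t | p (a, b)} := by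
  simp only [card_filter, sum_product]

lemma two_mul_card_filter_le_of_symm {α : Type*} [LinearOrder α] (s : Finset α)
    (P : α → α → Prop) [DecidableRel P] (hP : ∀ a b, P a b → P b a) :
    2 * #{x ∈ s ×ˢ s | x.1 ≤ x.2 ∧ P x.1 x.2} =
      #{x ∈ s ×ˢ s | P x.1 x.2} + #{a ∈ s | P a a} := by
  set L := {x ∈ s ×ˢ s | x.1 ≤ x.2 ∧ P x.1 x.2}
  set G := {x ∈ s ×ˢ s | x.2 ≤ x.1 ∧ P x.1 x.2}
  have hswap : #G = #L := by
    refine card_nbij' Prod.swap Prod.swap ?_ ?_ (fun _ _ => rfl) (fun _ _ => rfl) <;>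
      · rintro ⟨a, b⟩
        simp only [G, L, coe_filter, mem_product, Set.mem_ofPred_eq, Prod.swap_prod_mk]
        exact fun ⟨⟨ha, hb⟩, hle, hab⟩ => ⟨⟨hb, ha⟩, hle, hP a b hab⟩
  have hunion : L ∪ G = {x ∈ s ×ˢ s | P x.1 x.2} := by
    ext ⟨a, b⟩
    simp only [L, G, mem_union, mem_filter]
    have := le_total a b
    tauto
  have hinter : L ∩ G = {a ∈ s | P a a}.diag := by
    ext ⟨a, b⟩
    simp only [L, G, mem_inter, mem_filter, mem_diag, mem_product]
    constructor
    · rintro ⟨⟨⟨ha, -⟩, hab, haa⟩, -, hba, -⟩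
      obtain rfl := le_antisymm hab hba
      exact ⟨⟨ha, haa⟩, rfl⟩
    · rintro ⟨⟨ha, haa⟩, rfl⟩
      exact ⟨⟨⟨ha, ha⟩, le_rfl, haa⟩, ⟨ha, ha⟩, le_rfl, haa⟩
  calc 2 * #L = #L + #G := by rw [two_mul, hswap]
    _ = #(L ∪ G) + #(L ∩ G) := (card_union_add_card_inter L G).symm
    _ = _ := by rw [hunion, hinter, diag_card]

end Finset

section

variable {k : ℕ}

lemma card_filter_add_modEq (hk : 0 < k) (c : ℕ) :
    #{p ∈ range k ×ˢ range k | p.1 + p.2 ≡ c [MOD k]} = k := by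
  simp only [card_filter_product_eq_sum, Nat.card_filter_range_add_modEq hk, sum_const,
    card_range, smul_eq_mul, mul_one]

lemma two_mul_card_filter_le_add_modEq (hk : 0 < k) (c : ℕ) :
    2 * #{p ∈ range k ×ˢ range k | p.1 ≤ p.2 ∧ p.1 + p.2 ≡ c [MOD k]} =
      k + #{μ ∈ range k | 2 * μ ≡ c [MOD k]} := by
  rw [two_mul_card_filter_le_of_symm (range k) (fun a b => a + b ≡ c [MOD k])
    fun a b h => by rwa [add_comm], card_filter_add_modEq hk]
  simp only [two_mul]

lemma card_filter_two_mul_modEq_zero_add_one (hk : 0 < k) :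
    #{μ ∈ range k | 2 * μ ≡ 0 [MOD k]} + #{μ ∈ range k | 2 * μ ≡ 1 [MOD k]} = 2 := by
  obtain rfl | hk2 : k = 1 ∨ 2 ≤ k := by omega
  · decide
  have hone : 1 % k = 1 := Nat.one_mod_eq_one.2 (by omega)
  have hdisj : Disjoint {μ ∈ range k | 2 * μ ≡ 0 [MOD k]} {μ ∈ range k | 2 * μ ≡ 1 [MOD k]} :=
    disjoint_filter.2 fun μ _ h0 h1 => by
      have := h0.symm.trans h1
      simp [Nat.ModEq, hone] at this
  have hsol : {μ ∈ range k | 2 * μ ≡ 0 [MOD k] ∨ 2 * μ ≡ 1 [MOD k]} = {0, (k + 1) / 2} := by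
    ext μ
    simp only [mem_filter, mem_range, mem_insert, mem_singleton, Nat.ModEq, Nat.zero_mod, hone]
    by_cases hμ : μ < k
    · have h := Nat.mod_add_div (2 * μ) k
      have hr := Nat.mod_lt (2 * μ) hk
      have hq : 2 * μ / k < 2 := Nat.div_lt_of_lt_mul (by omega)
      generalize 2 * μ / k = q at h hq
      interval_cases q <;> omega
    · omega
  rw [← card_union_of_disjoint hdisj, ← filter_or, hsol, card_pair (by omega)]

lemma sum_card_filter_two_mul_modEq (hk : 0 < k) (M : ℕ) :
    ∑ m ∈ range (k * M + 2), #{μ ∈ range k | 2 * μ ≡ m [MOD k]} = k * M + 2 := by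
  have hbulk : ∑ m ∈ range (k * M), #{μ ∈ range k | 2 * μ ≡ m [MOD k]} = k * M :=
    calc _ = ∑ μ ∈ range k, #{m ∈ range (k * M) | m ≡ 2 * μ [MOD k]} := by
          simp only [card_filter, Nat.ModEq.comm (a := 2 * _)]
          exact sum_comm
      _ = k * M := by simp [Nat.card_filter_range_mul_modEq hk]
  have hzero (μ : ℕ) : 2 * μ ≡ k * M [MOD k] ↔ 2 * μ ≡ 0 [MOD k] := by
    simp only [Nat.ModEq, Nat.mul_mod_right, Nat.zero_mod]
  have hone (μ : ℕ) : 2 * μ ≡ k * M + 1 [MOD k] ↔ 2 * μ ≡ 1 [MOD k] := by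
    simp only [Nat.ModEq, Nat.mul_add_mod]
  rw [sum_range_succ, sum_range_succ, hbulk, add_assoc]
  simp only [hzero, hone]
  rw [card_filter_two_mul_modEq_zero_add_one hk]

end

theorem topological_order_general (k M : ℕ) (hk : 1 ≤ k) :
    2 * Nat.card {t : ℕ × ℕ × ℕ //
        t.1 < k * M + 2 ∧ t.2.1 ≤ t.2.2 ∧ t.2.2 ≤ k - 1 ∧
          (t.2.1 + t.2.2) % k = t.1 % k} =
      (k + 1) * (k * M + 2) := by
  have hsectors : Nat.card {t : ℕ × ℕ × ℕ //
        t.1 < k * M + 2 ∧ t.2.1 ≤ t.2.2 ∧ t.2.2 ≤ k - 1 ∧ (t.2.1 + t.2.2) % k = t.1 % k} =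
      #{t ∈ range (k * M + 2) ×ˢ (range k ×ˢ range k) |
        t.2.1 ≤ t.2.2 ∧ t.2.1 + t.2.2 ≡ t.1 [MOD k]} := by
    rw [← Nat.card_eq_finsetCard]
    refine Nat.card_congr (Equiv.subtypeEquivRight fun t => ?_)
    simp only [mem_filter, mem_product, mem_range]
    unfold Nat.ModEq
    omega
  rw [hsectors, card_filter_product_eq_sum, mul_sum]
  calc ∑ m ∈ range (k * M + 2),
        2 * #{p ∈ range k ×ˢ range k | p.1 ≤ p.2 ∧ p.1 + p.2 ≡ m [MOD k]}
      = ∑ m ∈ range (k * M + 2), (k + #{μ ∈ range k | 2 * μ ≡ m [MOD k]}) :=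
        sum_congr rfl fun m _ => two_mul_card_filter_le_add_modEq hk m
    _ = (k + 1) * (k * M + 2) := by
        rw [sum_add_distrib, sum_const, card_range, sum_card_filter_two_mul_modEq hk, smul_eq_mul]
        ring

/-- **Topological order of the ℤ_k-parafermion Hall state.**
For `k ≥ 1` and `M ≥ 1` odd, twice the number of sectors — pairs of an
electric-charge label `0 ≤ m < kM+2` and a parafermion label `0 ≤ μ ≤ ρ ≤ k−1`
subject to the ℤ_k parity rule `μ + ρ ≡ m (mod k)` — equals `(k+1)(kM+2)`,
i.e. `N_k = (k+1)(kM+2)/2`. -/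
theorem topological_order (k M : ℕ) (hk : 1 ≤ k) (hM : 1 ≤ M) (hModd : Odd M) :
    2 * Nat.card {t : ℕ × ℕ × ℕ //
        t.1 < k * M + 2 ∧ t.2.1 ≤ t.2.2 ∧ t.2.2 ≤ k - 1 ∧
          (t.2.1 + t.2.2) % k = t.1 % k} =
      (k + 1) * (k * M + 2) :=
  topological_order_general k M hk
end

section
/- Let k ≥ 2 and M ≥ 1 be integers with M odd, and let G be the Gram matrix of the maximally symmetric lattice. Then G is invertible and (G⁻¹)₀₀ = k/(kM+2). (Equivalently, the filling fraction ν = (Q|Q) = Qᵀ(1,0,…,0)-entry of G⁻¹ equals 1/(L − (ω|ω)) with L = M+2 and (ω|ω) = 2(k−1)/k, i.e. ν_k = k/(kM+2).) -/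
open Matrix

/-! ### Auxiliary lemmas -/

lemma FFsum3 (N a b c : ℕ) (f : ℕ → ℚ) (hab : a < b) (hbc : b < c) (hcN : c < N)
    (h0 : ∀ j, j < N → j ≠ a → j ≠ b → j ≠ c → f j = 0) :
    ∑ j ∈ Finset.range N, f j = f a + f b + f c := by
  have hsub : ({a, b, c} : Finset ℕ) ⊆ Finset.range N := by
    intro x hx
    simp only [Finset.mem_insert, Finset.mem_singleton] at hx
    simp only [Finset.mem_range]
    omega
  rw [← Finset.sum_subset hsub]
  · rw [Finset.sum_insert (by simp only [Finset.mem_insert, Finset.mem_singleton]; omega),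
      Finset.sum_insert (by simp only [Finset.mem_singleton]; omega),
      Finset.sum_singleton, add_assoc]
  · intro x hx hx2
    simp only [Finset.mem_range] at hx
    simp only [Finset.mem_insert, Finset.mem_singleton, not_or] at hx2
    exact h0 x hx hx2.1 hx2.2.1 hx2.2.2

lemma FFg00 (k M : ℕ) (hk : 2 ≤ k) : gramEnt k M 0 0 = (M:ℤ)+2 := by
  unfold gramEnt cartanEnt; split_ifs <;> first | omega | simp_all | (simp_all; omega)

lemma FFg01 (k M : ℕ) (hk : 2 ≤ k) : gramEnt k M 0 1 = 1 := by
  unfold gramEnt cartanEnt; split_ifs <;> first | omega | simp_all | (simp_all; omega)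

lemma FFg0k (k M : ℕ) (hk : 2 ≤ k) : gramEnt k M 0 k = -1 := by
  unfold gramEnt cartanEnt; split_ifs <;> first | omega | simp_all | (simp_all; omega)

lemma FFgz0 (k M : ℕ) (hk : 2 ≤ k) (j : ℕ) (h1 : j ≠ 0) (h2 : j ≠ 1) (h3 : j ≠ k) :
    gramEnt k M 0 j = 0 := by
  unfold gramEnt cartanEnt; split_ifs <;> first | omega | simp_all | (simp_all; omega)

lemma FFg10 (k M : ℕ) (hk : 2 ≤ k) : gramEnt k M 1 0 = 1 := by
  unfold gramEnt cartanEnt; split_ifs <;> first | omega | simp_all | (simp_all; omega)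

lemma FFgk0 (k M : ℕ) (hk : 2 ≤ k) : gramEnt k M k 0 = -1 := by
  unfold gramEnt cartanEnt; split_ifs <;> first | omega | simp_all | (simp_all; omega)

lemma FFgi0 (k M i : ℕ) (hk : 2 ≤ k) (h1 : 2 ≤ i) (h2 : i ≤ 2*k-2) (h3 : i ≠ k) :
    gramEnt k M i 0 = 0 := by
  unfold gramEnt cartanEnt; split_ifs <;> first | omega | simp_all | (simp_all; omega)

lemma FFgdiag (k M i : ℕ) (hk : 2 ≤ k) (h1 : 1 ≤ i) (h2 : i ≤ 2*k-2) :
    gramEnt k M i i = 2 := by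
  unfold gramEnt cartanEnt; split_ifs <;> first | omega | simp_all | (simp_all; omega)

lemma FFgleft (k M i : ℕ) (hk : 2 ≤ k) (h1 : 2 ≤ i) (h2 : i ≤ 2*k-2) :
    gramEnt k M i (i-1) = if i = k then 0 else -1 := by
  unfold gramEnt cartanEnt; split_ifs <;> first | omega | simp_all | (simp_all; omega)

set_option maxHeartbeats 2000000 in
lemma FFgright (k M i : ℕ) (hk : 2 ≤ k) (h1 : 1 ≤ i) (h2 : i ≤ 2*k-3) :
    gramEnt k M i (i+1) = if i+1 = k then 0 else -1 := by
  unfold gramEnt cartanEnt; split_ifs <;> first | omega | simp_all | (simp_all; omega)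

lemma FFgzA (k M i j : ℕ) (hk : 2 ≤ k) (hi1 : 1 ≤ i) (hi2 : i ≤ 2*k-2)
    (h0 : j ≠ 0) (h1 : j ≠ i-1) (h2 : j ≠ i) (h3 : j ≠ i+1) :
    gramEnt k M i j = 0 := by
  unfold gramEnt cartanEnt; split_ifs <;> first | omega | simp_all | (simp_all; omega)

lemma FFgzB (k M i j : ℕ) (hk : 2 ≤ k) (hi1 : 2 ≤ i) (hi2 : i ≤ 2*k-2)
    (hik : i ≠ k) (h1 : j ≠ i-1) (h2 : j ≠ i) (h3 : j ≠ i+1) :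
    gramEnt k M i j = 0 := by
  unfold gramEnt cartanEnt; split_ifs <;> first | omega | simp_all | (simp_all; omega)

set_option maxHeartbeats 2000000 in
lemma FFrowsum (k M : ℕ) (hk : 2 ≤ k) (i : ℕ) (hi : i < 2*k-1) (y : ℕ → ℚ) :
    ∑ j ∈ Finset.range (2*k-1), (gramEnt k M i j : ℚ) * y j =
      if i = 0 then ((M:ℚ)+2) * y 0 + y 1 - y k
      else (if i = 1 then y 0 else if i = k then -(y 0) else 0)
           + (if i = 1 ∨ i = k then 0 else -(y (i-1)))
           + 2 * y i
           + (if i+1 = k ∨ i = 2*k-2 then 0 else -(y (i+1))) := by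
  by_cases hi0 : i = 0
  · subst hi0
    rw [FFsum3 (2*k-1) 0 1 k _ (by omega) (by omega) (by omega)
        (fun j hj h1 h2 h3 => by rw [FFgz0 k M hk j h1 h2 h3]; norm_num),
      FFg00 k M hk, FFg01 k M hk, FFg0k k M hk, if_pos rfl]
    push_cast; ring
  · rw [if_neg hi0]
    by_cases hi1 : i = 1
    · subst hi1
      have er : gramEnt k M 1 2 = if 2 = k then 0 else -1 := by
        have := FFgright k M 1 hk (by omega) (by omega)
        norm_num at this ⊢; exact this
      rw [FFsum3 (2*k-1) 0 1 2 _ (by omega) (by omega) (by omega)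
          (fun j hj h1 h2 h3 => by
            rw [FFgzA k M 1 j hk (by omega) (by omega) h1 (by omega) h2 (by omega)]
            norm_num),
        FFg10 k M hk, FFgdiag k M 1 hk (by omega) (by omega), er, if_pos rfl,
        if_pos (show (1:ℕ) = 1 ∨ 1 = k from Or.inl rfl)]
      by_cases h2k : 1 + 1 = k
      · simp only [if_pos (show (2:ℕ) = k by omega), if_pos (Or.inl h2k)]
        push_cast; ring
      · simp only [if_neg (show ¬(2:ℕ) = k by omega),
          if_neg (show ¬(1+1 = k ∨ 1 = 2*k-2) by omega)]
        push_cast; ring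
    · rw [if_neg hi1]
      by_cases hilast : i = 2*k-2
      · rw [FFsum3 (2*k-1) 0 (i-1) i _ (by omega) (by omega) (by omega)
            (fun j hj h1 h2 h3 => by
              rw [FFgzA k M i j hk (by omega) (by omega) h1 h2 h3 (by omega)]
              norm_num),
          FFgdiag k M i hk (by omega) (by omega),
          FFgleft k M i hk (by omega) (by omega),
          if_pos (show i+1 = k ∨ i = 2*k-2 from Or.inr hilast)]
        by_cases hik : i = k
        · have hi2 : i = 2 := by omega
          have hk2 : k = 2 := by omega
          subst hi2; subst hk2
          rw [FFgk0 2 M (by norm_num)]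
          norm_num
        · simp only [FFgi0 k M i hk (by omega) (by omega) hik, if_neg hik,
            if_neg (show ¬(i = 1 ∨ i = k) by omega)]
          push_cast; ring
      · by_cases hik : i = k
        · have e0 : gramEnt k M i 0 = -1 := by rw [hik]; exact FFgk0 k M hk
          have e2 : (gramEnt k M i (i+1) : ℤ) = -1 := by
            rw [FFgright k M i hk (by omega) (by omega), if_neg (by omega : ¬ i+1 = k)]
          rw [FFsum3 (2*k-1) 0 i (i+1) _ (by omega) (by omega) (by omega)
              (fun j hj h1 h2 h3 => by
                by_cases hj1 : j = i-1
                · subst hj1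
                  rw [FFgleft k M i hk (by omega) (by omega), if_pos hik]
                  norm_num
                · rw [FFgzA k M i j hk (by omega) (by omega) h1 hj1 h2 h3]; norm_num),
            e0, FFgdiag k M i hk (by omega) (by omega), e2]
          simp only [if_pos hik, if_pos (Or.inr hik),
            if_neg (show ¬(i+1 = k ∨ i = 2*k-2) by omega)]
          push_cast; ring
        · rw [FFsum3 (2*k-1) (i-1) i (i+1) _ (by omega) (by omega) (by omega)
              (fun j hj h1 h2 h3 => by
                rw [FFgzB k M i j hk (by omega) (by omega) hik h1 h2 h3]; norm_num),
            FFgleft k M i hk (by omega) (by omega),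
            FFgdiag k M i hk (by omega) (by omega),
            FFgright k M i hk (by omega) (by omega)]
          simp only [if_neg hik, if_neg (show ¬(i = 1 ∨ i = k) by omega)]
          by_cases hne : i+1 = k
          · simp only [if_pos hne, if_pos (Or.inl hne)]; push_cast; ring
          · simp only [if_neg hne, if_neg (show ¬(i+1 = k ∨ i = 2*k-2) by omega)]
            push_cast; ring


lemma FFmulVec (k M : ℕ) (x : Fin (2*k-1) → ℚ) (X : ℕ → ℚ)
    (hX : ∀ j : Fin (2*k-1), X j = x j) (i : Fin (2*k-1)) :
    (gramM k M).mulVec x i = ∑ j ∈ Finset.range (2*k-1), (gramEnt k M i j : ℚ) * X j := by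
  rw [← Fin.sum_univ_eq_sum_range (fun j => (gramEnt k M (i:ℕ) j : ℚ) * X j) (2*k-1)]
  simp only [Matrix.mulVec, dotProduct, gramM]
  exact Finset.sum_congr rfl fun j _ => by rw [hX]

set_option maxHeartbeats 2000000 in
lemma FFker (k M : ℕ) (hk : 2 ≤ k) (x : Fin (2*k-1) → ℚ)
    (hx : (gramM k M).mulVec x = 0) : x = 0 := by
  set X : ℕ → ℚ := fun n => if h : n < 2*k-1 then x ⟨n, h⟩ else 0 with hXdef
  have hX : ∀ j : Fin (2*k-1), X (j:ℕ) = x j := fun j => by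
    simp only [hXdef]; rw [dif_pos j.isLt]
  have E : ∀ i : ℕ, i < 2*k-1 →
      (if i = 0 then ((M:ℚ)+2) * X 0 + X 1 - X k
       else (if i = 1 then X 0 else if i = k then -(X 0) else 0)
           + (if i = 1 ∨ i = k then 0 else -(X (i-1)))
           + 2 * X i
           + (if i+1 = k ∨ i = 2*k-2 then 0 else -(X (i+1)))) = 0 := by
    intro i hi
    have h2 : (gramM k M).mulVec x ⟨i, hi⟩ = 0 := congrFun hx _
    have h3 := (FFmulVec k M x X hX ⟨i, hi⟩).symm.trans h2
    exact (FFrowsum k M hk i hi X).symm.trans h3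
  have claimA : ∀ d, d ≤ k-2 → X (k-1-d) = ((d:ℚ)+1) * X (k-1) := by
    intro d
    induction d using Nat.strong_induction_on with
    | _ d ih =>
      intro hd
      rcases d with _ | d
      · norm_num
      · rcases d with _ | d
        · have h := E (k-1) (by omega)
          rw [if_neg (by omega), if_neg (by omega), if_neg (by omega),
            if_neg (show ¬(k-1 = 1 ∨ k-1 = k) by omega),
            if_pos (show k-1+1 = k ∨ k-1 = 2*k-2 from Or.inl (by omega))] at h
          rw [show k-1-1 = k-1-1 from rfl]
          push_cast
          linarith [h]
        · have h := E (k-1-(d+1)) (by omega)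
          rw [if_neg (by omega), if_neg (by omega), if_neg (by omega),
            if_neg (show ¬(k-1-(d+1) = 1 ∨ k-1-(d+1) = k) by omega),
            if_neg (show ¬(k-1-(d+1)+1 = k ∨ k-1-(d+1) = 2*k-2) by omega)] at h
          rw [show k-1-(d+1)-1 = k-1-(d+2) by omega,
            show k-1-(d+1)+1 = k-1-d by omega] at h
          have a1 := ih (d+1) (by omega) (by omega)
          have a2 := ih d (by omega) (by omega)
          push_cast at a1 a2 ⊢
          linarith [h]
  have claimB : ∀ d, d ≤ k-2 → X (2*k-2-d) = ((d:ℚ)+1) * X (2*k-2) := by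
    intro d
    induction d using Nat.strong_induction_on with
    | _ d ih =>
      intro hd
      rcases d with _ | d
      · norm_num
      · rcases d with _ | d
        · have h := E (2*k-2) (by omega)
          rw [if_neg (by omega), if_neg (by omega), if_neg (by omega),
            if_neg (show ¬(2*k-2 = 1 ∨ 2*k-2 = k) by omega),
            if_pos (show 2*k-2+1 = k ∨ 2*k-2 = 2*k-2 from Or.inr rfl)] at h
          push_cast
          linarith [h]
        · have h := E (2*k-2-(d+1)) (by omega)
          rw [if_neg (by omega), if_neg (by omega), if_neg (by omega),
            if_neg (show ¬(2*k-2-(d+1) = 1 ∨ 2*k-2-(d+1) = k) by omega),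
            if_neg (show ¬(2*k-2-(d+1)+1 = k ∨ 2*k-2-(d+1) = 2*k-2) by omega)] at h
          rw [show 2*k-2-(d+1)-1 = 2*k-2-(d+2) by omega,
            show 2*k-2-(d+1)+1 = 2*k-2-d by omega] at h
          have a1 := ih (d+1) (by omega) (by omega)
          have a2 := ih d (by omega) (by omega)
          push_cast at a1 a2 ⊢
          linarith [h]
  have e0 : ((M:ℚ)+2) * X 0 + X 1 - X k = 0 := by
    have h := E 0 (by omega); rwa [if_pos rfl] at h
  have hA : X 1 = ((k:ℚ)-1) * X (k-1) := by
    have h := claimA (k-2) (by omega)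
    rw [show k-1-(k-2) = 1 by omega] at h
    rw [h, Nat.cast_sub (by omega : 2 ≤ k)]
    push_cast; ring
  have hC : X k = ((k:ℚ)-1) * X (2*k-2) := by
    have h := claimB (k-2) (by omega)
    rw [show 2*k-2-(k-2) = k by omega] at h
    rw [h, Nat.cast_sub (by omega : 2 ≤ k)]
    push_cast; ring
  have hu : X 0 = -(k:ℚ) * X (k-1) := by
    by_cases hk2 : k = 2
    · have h := E 1 (by omega)
      rw [if_neg (by omega), if_pos rfl, if_pos (Or.inl rfl),
        if_pos (show 1+1 = k ∨ 1 = 2*k-2 from Or.inl (by omega))] at h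
      have hq : (k:ℚ) = 2 := by rw [hk2]; norm_num
      have hA' : X 1 = ((k:ℚ)-1) * X (k-1) := hA
      rw [hq] at hA' ⊢
      norm_num at hA' ⊢
      linarith [h, hA']
    · have h := E 1 (by omega)
      rw [if_neg (by omega), if_pos rfl, if_pos (Or.inl rfl),
        if_neg (show ¬(1+1 = k ∨ 1 = 2*k-2) by omega)] at h
      have hB := claimA (k-3) (by omega)
      rw [show k-1-(k-3) = 2 by omega] at hB
      have c2 : ((k-3:ℕ):ℚ) = (k:ℚ) - 3 := by
        rw [Nat.cast_sub (by omega)]; norm_num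
      rw [c2] at hB
      have h2 : X (1+1) = X 2 := rfl
      rw [h2] at h
      linear_combination h - 2*hA + hB
  have hv : X 0 = (k:ℚ) * X (2*k-2) := by
    by_cases hk2 : k = 2
    · have h := E k (by omega)
      rw [if_neg (by omega), if_neg (by omega), if_pos rfl,
        if_pos (show k = 1 ∨ k = k from Or.inr rfl),
        if_pos (show k+1 = k ∨ k = 2*k-2 from Or.inr (by omega))] at h
      have hq : (k:ℚ) = 2 := by rw [hk2]; norm_num
      have hC' : X k = ((k:ℚ)-1) * X (2*k-2) := hC
      rw [hq] at hC' ⊢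
      norm_num at hC' ⊢
      linarith [h, hC']
    · have h := E k (by omega)
      rw [if_neg (by omega), if_neg (by omega), if_pos rfl,
        if_pos (show k = 1 ∨ k = k from Or.inr rfl),
        if_neg (show ¬(k+1 = k ∨ k = 2*k-2) by omega)] at h
      have hD := claimB (k-3) (by omega)
      rw [show 2*k-2-(k-3) = k+1 by omega] at hD
      have c2 : ((k-3:ℕ):ℚ) = (k:ℚ) - 3 := by
        rw [Nat.cast_sub (by omega)]; norm_num
      rw [c2] at hD
      push_cast at hD
      linear_combination -h + 2*hC - hD
  have hkq : (k:ℚ) ≠ 0 := Nat.cast_ne_zero.mpr (by omega)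
  have hs : X (2*k-2) = -(X (k-1)) := by
    have h2 : (k:ℚ) * X (2*k-2) = (k:ℚ) * (-(X (k-1))) := by
      linear_combination hu - hv
    exact mul_left_cancel₀ hkq h2
  have hpos : ((k:ℚ)*M + 2) ≠ 0 := by positivity
  have ht : X (k-1) = 0 := by
    have h3 : ((k:ℚ)*M+2) * X (k-1) = 0 := by
      linear_combination -e0 + ((M:ℚ)+2)*hu + hA - hC - ((k:ℚ)-1)*hs
    exact (mul_eq_zero.mp h3).resolve_left hpos
  have hX0 : X 0 = 0 := by rw [hu, ht]; ring
  have hs0 : X (2*k-2) = 0 := by rw [hs, ht]; norm_num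
  have hall : ∀ n, n < 2*k-1 → X n = 0 := by
    intro n hn
    rcases Nat.eq_zero_or_pos n with h | h
    · rw [h]; exact hX0
    · by_cases hnk : n < k
      · have h' := claimA (k-1-n) (by omega)
        rw [show k-1-(k-1-n) = n by omega] at h'
        rw [h', ht]; ring
      · have h' := claimB (2*k-2-n) (by omega)
        rw [show 2*k-2-(2*k-2-n) = n by omega] at h'
        rw [h', hs0]; ring
  funext j
  show x j = 0
  rw [← hX j]
  exact hall j j.isLt


def FFQv (k M j : ℕ) : ℚ :=
  if j = 0 then (k:ℚ) / ((k:ℚ)*M+2)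
  else if j < k then ((j:ℚ) - k) / ((k:ℚ)*M+2)
  else (2*(k:ℚ) - 1 - j) / ((k:ℚ)*M+2)

lemma FFq0 (k M : ℕ) : FFQv k M 0 = (k:ℚ) / ((k:ℚ)*M+2) := by
  unfold FFQv; rw [if_pos rfl]

lemma FFqA (k M j : ℕ) (h1 : j ≠ 0) (h2 : j < k) :
    FFQv k M j = ((j:ℚ) - k) / ((k:ℚ)*M+2) := by
  unfold FFQv; rw [if_neg h1, if_pos h2]

lemma FFqB (k M j : ℕ) (hk : 2 ≤ k) (h2 : k ≤ j) :
    FFQv k M j = (2*(k:ℚ) - 1 - j) / ((k:ℚ)*M+2) := by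
  unfold FFQv; rw [if_neg (by omega), if_neg (by omega)]

set_option maxHeartbeats 2000000 in
lemma FFsol (k M : ℕ) (hk : 2 ≤ k) :
    (gramM k M).mulVec (fun j => FFQv k M (j:ℕ))
      = Pi.single (⟨0, by omega⟩ : Fin (2*k-1)) 1 := by
  have hD : ((k:ℚ)*M+2) ≠ 0 := by positivity
  funext i0
  rcases i0 with ⟨i, hi⟩
  have hL : (gramM k M).mulVec (fun j => FFQv k M (j:ℕ)) ⟨i, hi⟩
      = ∑ j ∈ Finset.range (2*k-1), (gramEnt k M i j : ℚ) * FFQv k M j :=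
    FFmulVec k M _ (fun n => FFQv k M n) (fun j => rfl) ⟨i, hi⟩
  rw [hL, FFrowsum k M hk i hi (fun n => FFQv k M n), Pi.single_apply]
  simp only [Fin.mk.injEq]
  by_cases hi0 : i = 0
  · subst hi0
    rw [if_pos rfl, if_pos rfl, FFq0, FFqA k M 1 (by omega) (by omega),
      FFqB k M k hk (le_refl k)]
    push_cast
    field_simp
    ring
  · rw [if_neg hi0, if_neg hi0]
    by_cases hi1 : i = 1
    · subst hi1
      rw [if_pos rfl, if_pos (Or.inl rfl)]
      by_cases h2k : k = 2
      · subst h2k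
        rw [if_pos (show 1+1 = 2 ∨ (1:ℕ) = 2*2-2 by norm_num),
          FFq0, FFqA 2 M 1 (by omega) (by omega)]
        push_cast
        field_simp
        ring
      · rw [if_neg (show ¬(1+1 = k ∨ 1 = 2*k-2) by omega), FFq0,
          FFqA k M 1 (by omega) (by omega), FFqA k M (1+1) (by omega) (by omega)]
        push_cast
        field_simp
        ring
    · rw [if_neg hi1]
      by_cases hilast : i = 2*k-2
      · by_cases hik : i = k
        · have hi2 : i = 2 := by omega
          have hk2 : k = 2 := by omega
          subst hi2
          subst hk2
          rw [if_pos rfl, if_pos (show (2:ℕ) = 1 ∨ (2:ℕ) = 2 by norm_num),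
            if_pos (show 2+1 = 2 ∨ (2:ℕ) = 2*2-2 by norm_num),
            FFq0, FFqB 2 M 2 (by omega) (by omega)]
          push_cast
          field_simp
          ring
        · rw [if_neg hik, if_neg (show ¬(i = 1 ∨ i = k) by omega),
            if_pos (show i+1 = k ∨ i = 2*k-2 from Or.inr hilast),
            FFqB k M (i-1) hk (by omega), FFqB k M i hk (by omega)]
          have c1 : ((i-1:ℕ):ℚ) = (i:ℚ) - 1 := by
            rw [Nat.cast_sub (by omega)]; norm_num
          rw [c1]
          have hcast : (i:ℚ) = 2*(k:ℚ) - 2 := by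
            rw [hilast, Nat.cast_sub (by omega)]; push_cast; ring
          field_simp
          linarith [hcast]
      · by_cases hik : i = k
        · subst hik
          rw [if_pos rfl, if_pos (show i = 1 ∨ (i:ℕ) = i from Or.inr rfl),
            if_neg (show ¬(i+1 = i ∨ i = 2*i-2) by omega),
            FFq0, FFqB i M i (by omega) (le_refl i), FFqB i M (i+1) (by omega) (by omega)]
          push_cast
          field_simp
          ring
        · rw [if_neg hik, if_neg (show ¬(i = 1 ∨ i = k) by omega)]
          have c1 : ((i-1:ℕ):ℚ) = (i:ℚ) - 1 := by
            rw [Nat.cast_sub (by omega)]; norm_num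
          by_cases hiA : i < k
          · rw [FFqA k M (i-1) (by omega) (by omega), FFqA k M i (by omega) hiA]
            by_cases hne : i+1 = k
            · rw [if_pos (Or.inl hne), c1]
              have hcast : (i:ℚ) + 1 = (k:ℚ) := by exact_mod_cast hne
              field_simp
              linarith [hcast]
            · rw [if_neg (show ¬(i+1 = k ∨ i = 2*k-2) by omega),
                FFqA k M (i+1) (by omega) (by omega), c1]
              push_cast
              field_simp
              ring
          · rw [FFqB k M (i-1) hk (by omega), FFqB k M i hk (by omega),
              if_neg (show ¬(i+1 = k ∨ i = 2*k-2) by omega),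
              FFqB k M (i+1) hk (by omega), c1]
            push_cast
            field_simp
            ring

/-- **Filling fraction of the maximally symmetric parent abelian state.**
For `k ≥ 2` and `M ≥ 1` odd, the Gram matrix `G` of the maximally symmetric
lattice is invertible and `(G⁻¹)₀₀ = k/(kM+2)`: the filling fraction
`ν = (Q|Q) = (G⁻¹)₀₀ = 1/(L − (ω|ω))` with `L = M+2` and `(ω|ω) = 2(k−1)/k`
equals `ν_k = k/(kM+2)`. -/
theorem filling_fraction_maximally_symmetric (k M : ℕ) (hk : 2 ≤ k) (hM : 1 ≤ M)
    (hModd : Odd M) :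
    (gramM k M).det ≠ 0 ∧
      (gramM k M)⁻¹ ⟨0, by omega⟩ ⟨0, by omega⟩ = (k : ℚ) / ((k : ℚ) * M + 2) := by
  have hdet : (gramM k M).det ≠ 0 := by
    intro h0
    obtain ⟨v, hvne, hv⟩ := Matrix.exists_mulVec_eq_zero_iff.mpr h0
    exact hvne (FFker k M hk v hv)
  refine ⟨hdet, ?_⟩
  have hGQ := FFsol k M hk
  have hQ : (gramM k M)⁻¹.mulVec (Pi.single (⟨0, by omega⟩ : Fin (2*k-1)) 1)
      = fun j : Fin (2*k-1) => FFQv k M (j:ℕ) := by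
    rw [← hGQ, Matrix.mulVec_mulVec,
      Matrix.nonsing_inv_mul _ (isUnit_iff_ne_zero.mpr hdet), Matrix.one_mulVec]
  have h1 : (gramM k M)⁻¹.mulVec (Pi.single (⟨0, by omega⟩ : Fin (2*k-1)) 1)
      = fun i => (gramM k M)⁻¹ i ⟨0, by omega⟩ * 1 :=
    Matrix.mulVec_single _ _ _
  have h3 := congrFun (h1.symm.trans hQ) (⟨0, by omega⟩ : Fin (2*k-1))
  rw [mul_one] at h3
  rw [h3]
  show FFQv k M 0 = _
  rw [FFq0]
end

section
/- Let k ≥ 2 and M ≥ 1 be integers with M odd. Then det G = k(kM+2), where G is the Gram matrix of the maximally symmetric lattice; moreover the (2k−1)×(2k−1) block-diagonal matrix G_L = diag(k(kM+2)) ⊕ C ⊕ C (one 1×1 block k(kM+2) and two copies of the A_{k−1} Cartan matrix C) satisfies det G_L = k³(kM+2) = k² · det G. (Hence the sublattice L has index k in Γ: |L| = k²|Γ|.) -/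
open Matrix

/-- The Gram matrix `G_L` of the decomposable sublattice
`L = (kM+2)ℤQ ⊕ A_{k-1} ⊕ A_{k-1}`: block diagonal with one `1×1` block
`k(kM+2)` and two copies of the `A_{k-1}` Cartan matrix. -/
def gramL (k M : ℕ) : Matrix (Fin (2 * k - 1)) (Fin (2 * k - 1)) ℚ :=
  Matrix.of fun i j =>
    if (i : ℕ) = 0 ∧ (j : ℕ) = 0 then (k : ℚ) * ((k : ℚ) * M + 2)
    else if (i : ℕ) = 0 ∨ (j : ℕ) = 0 then 0
    else if (i : ℕ) < k ∧ (j : ℕ) < k then (cartanEnt i j : ℚ)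
    else if k ≤ (i : ℕ) ∧ k ≤ (j : ℕ) then
      (cartanEnt ((i : ℕ) - (k - 1)) ((j : ℕ) - (k - 1)) : ℚ)
    else 0

/-!
Listing the basis as `e₀`, then the two `A_{k-1}` blocks, `G` becomes a bordered matrix with
corner `M + 2`, diagonal block `D = C ⊕ C` and border `u = (ε, -ε)`, where `ε` is the first
basis vector of a block; so by the Schur complement `det G = det D · (M + 2 - uᵀ D⁻¹ u)`.
The three-term recurrence of the tridiagonal matrix `C` gives `det C = k`, and by Cramer's rule
`(C⁻¹)₁₁ = det A_{k-2} / det A_{k-1} = (k-1)/k`. Hence `det G = k² (M + 2 - 2(k-1)/k) = k(kM+2)`,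
while `G_L` is block diagonal with determinant `k(kM+2) · k²`.
-/

namespace CartanMatrix

theorem A_apply_eq_cartanEnt (n : ℕ) (i j : Fin n) : A n i j = cartanEnt i j := by
  simp [A, cartanEnt, Fin.ext_iff]

theorem A_submatrix_succ_succ (n : ℕ) : (A (n + 1)).submatrix Fin.succ Fin.succ = A n := by
  ext i j
  simp [A, Fin.succ_inj]

theorem det_A_submatrix_succ_succAbove_one (n : ℕ) :
    ((A (n + 2)).submatrix Fin.succ (Fin.succAbove 1)).det = -(A n).det := by
  have minor : ((A (n + 2)).submatrix Fin.succ (Fin.succAbove 1)).submatrix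
      (Fin.succAbove 0) Fin.succ = A n := by
    ext i j
    simp [A, Fin.succ_inj]
  rw [det_succ_column_zero, Fin.sum_univ_succ, Finset.sum_eq_zero, minor]
  · simp [A]
  · intro i _
    simp [A]

theorem det_A_add_two (n : ℕ) : (A (n + 2)).det = 2 * (A (n + 1)).det - (A n).det := by
  rw [det_succ_row_zero, Fin.sum_univ_succ, Fin.sum_univ_succ, Finset.sum_eq_zero,
    Fin.succAbove_zero, A_submatrix_succ_succ, Fin.succ_zero_eq_one,
    det_A_submatrix_succ_succAbove_one]
  · simp [A, sub_eq_add_neg]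
  · intro j _
    simp [A, Fin.ext_iff]

theorem det_A (n : ℕ) : (A n).det = n + 1 := by
  induction n using Nat.twoStepInduction with
  | zero => simp
  | one => simp [A_one]
  | more n ih₀ ih₁ => rw [det_A_add_two, ih₀, ih₁]; push_cast; ring

end CartanMatrix

namespace Matrix

theorem det_fromBlocks_replicateRow_replicateCol {ι n α : Type*} [Unique ι] [Fintype ι] [DecidableEq ι]
    [Fintype n] [DecidableEq n] [CommRing α] (a : α) (u v : n → α) (D : Matrix n n α)
    (hD : IsUnit D.det) :
    (fromBlocks (of fun _ _ => a : Matrix ι ι α) (replicateRow ι u) (replicateCol ι v) D).det =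
      D.det * (a - u ⬝ᵥ D⁻¹ *ᵥ v) := by
  have := D.invertibleOfIsUnitDet hD
  rw [det_fromBlocks₂₂, invOf_eq_nonsing_inv, Matrix.mul_assoc, ← replicateCol_mulVec,
    replicateRow_mul_replicateCol]
  congr 1
  rw [det_unique]
  rfl

theorem sum_elim_dotProduct_fromBlocks_mulVec {m n α : Type*} [Fintype m] [Fintype n]
    [NonUnitalNonAssocSemiring α] (P : Matrix m m α) (Q : Matrix n n α) (x : m → α) (y : n → α) :
    Sum.elim x y ⬝ᵥ fromBlocks P 0 0 Q *ᵥ Sum.elim x y = x ⬝ᵥ P *ᵥ x + y ⬝ᵥ Q *ᵥ y := by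
  simp [fromBlocks_mulVec]

end Matrix

def cartanQ (n : ℕ) : Matrix (Fin n) (Fin n) ℚ := (CartanMatrix.A n).map (↑)

theorem det_cartanQ (n : ℕ) : (cartanQ n).det = n + 1 := by
  rw [cartanQ, ← Int.cast_det, CartanMatrix.det_A]
  push_cast
  rfl

theorem cartanQ_submatrix_succ_succ (n : ℕ) :
    (cartanQ (n + 1)).submatrix Fin.succ Fin.succ = cartanQ n := by
  rw [cartanQ, submatrix_map, CartanMatrix.A_submatrix_succ_succ, cartanQ]

theorem cartanQ_inv_zero_zero (n : ℕ) : (cartanQ (n + 1))⁻¹ 0 0 = (n + 1) / (n + 2) := by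
  rw [inv_def, Matrix.smul_apply, adjugate_fin_succ_eq_det_submatrix, Fin.succAbove_zero,
    cartanQ_submatrix_succ_succ, det_cartanQ, det_cartanQ, Ring.inverse_eq_inv, smul_eq_mul,
    Fin.val_zero, add_zero, pow_zero, one_mul]
  push_cast
  field_simp
  ring

def doubleCartanQ (n : ℕ) : Matrix (Fin n ⊕ Fin n) (Fin n ⊕ Fin n) ℚ :=
  fromBlocks (cartanQ n) 0 0 (cartanQ n)

theorem det_doubleCartanQ (n : ℕ) : (doubleCartanQ n).det = (n + 1) ^ 2 := by
  rw [doubleCartanQ, det_fromBlocks_zero₁₂, det_cartanQ, sq]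

def gramBorder (n : ℕ) : Fin (n + 1) ⊕ Fin (n + 1) → ℚ :=
  Sum.elim (Pi.single 0 1) (Pi.single 0 (-1))

theorem gramBorder_dotProduct_inv_doubleCartanQ_mulVec (n : ℕ) :
    gramBorder n ⬝ᵥ (doubleCartanQ (n + 1))⁻¹ *ᵥ gramBorder n = 2 * (n + 1) / (n + 2) := by
  rw [doubleCartanQ, inv_fromBlocks_zero₁₂_of_isUnit_iff _ _ _ Iff.rfl, Matrix.mul_zero,
    Matrix.zero_mul, neg_zero, gramBorder, sum_elim_dotProduct_fromBlocks_mulVec]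
  simp [cartanQ_inv_zero_zero]
  ring

def reindexGram (n : ℕ) : Fin 1 ⊕ (Fin (n + 1) ⊕ Fin (n + 1)) ≃ Fin (2 * (n + 2) - 1) :=
  ((Equiv.sumCongr (Equiv.refl _) finSumFinEquiv).trans finSumFinEquiv).trans
    (finCongr (by omega))

theorem reindexGram_inl (n : ℕ) (x : Fin 1) : (reindexGram n (.inl x) : ℕ) = 0 := by
  simp [reindexGram]

theorem reindexGram_inr_inl (n : ℕ) (i : Fin (n + 1)) :
    (reindexGram n (.inr (.inl i)) : ℕ) = i + 1 := by
  simp [reindexGram, add_comm]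

theorem reindexGram_inr_inr (n : ℕ) (i : Fin (n + 1)) :
    (reindexGram n (.inr (.inr i)) : ℕ) = i + (n + 2) := by
  simp [reindexGram]
  omega

theorem gramM_submatrix_reindexGram (n M : ℕ) :
    (gramM (n + 2) M).submatrix (reindexGram n) (reindexGram n) =
      fromBlocks (of fun _ _ => (M : ℚ) + 2) (replicateRow _ (gramBorder n))
        (replicateCol _ (gramBorder n)) (doubleCartanQ (n + 1)) := by
  ext (_ | i | i) (_ | j | j) <;>
    simp only [gramM, gramBorder, doubleCartanQ, cartanQ, submatrix_apply, fromBlocks_apply₁₁,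
      fromBlocks_apply₁₂, fromBlocks_apply₂₁, fromBlocks_apply₂₂, replicateRow_apply,
      replicateCol_apply, reindexGram_inl, reindexGram_inr_inl, reindexGram_inr_inr, of_apply,
      map_apply, Matrix.zero_apply, Sum.elim_inl, Sum.elim_inr, Pi.single_apply,
      CartanMatrix.A_apply_eq_cartanEnt] <;>
    unfold gramEnt <;> push_cast <;> grind [cartanEnt]

theorem gramL_submatrix_reindexGram (n M : ℕ) :
    (gramL (n + 2) M).submatrix (reindexGram n) (reindexGram n) =
      fromBlocks (of fun _ _ => ((n : ℚ) + 2) * ((n + 2) * M + 2)) 0 0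
        (doubleCartanQ (n + 1)) := by
  ext (_ | i | i) (_ | j | j) <;>
    simp only [gramL, doubleCartanQ, cartanQ, submatrix_apply, fromBlocks_apply₁₁,
      fromBlocks_apply₁₂, fromBlocks_apply₂₁, fromBlocks_apply₂₂, reindexGram_inl,
      reindexGram_inr_inl, reindexGram_inr_inr, of_apply, map_apply, Matrix.zero_apply,
      CartanMatrix.A_apply_eq_cartanEnt] <;>
    grind [cartanEnt]

theorem det_gramM_add_two (n M : ℕ) :
    (gramM (n + 2) M).det = (n + 2) * ((n + 2) * M + 2) := by
  have hD : IsUnit (doubleCartanQ (n + 1)).det := by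
    rw [det_doubleCartanQ, isUnit_iff_ne_zero]
    positivity
  rw [← det_submatrix_equiv_self (reindexGram n), gramM_submatrix_reindexGram,
    det_fromBlocks_replicateRow_replicateCol _ _ _ _ hD, det_doubleCartanQ,
    gramBorder_dotProduct_inv_doubleCartanQ_mulVec]
  push_cast
  field_simp
  ring

theorem det_gramL_add_two (n M : ℕ) :
    (gramL (n + 2) M).det = (n + 2) ^ 3 * ((n + 2) * M + 2) := by
  rw [← det_submatrix_equiv_self (reindexGram n), gramL_submatrix_reindexGram,
    det_fromBlocks_zero₁₂, det_unique, of_apply, det_doubleCartanQ]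
  push_cast
  ring

theorem gram_determinants_general (k M : ℕ) (hk : 2 ≤ k) :
    (gramM k M).det = (k : ℚ) * ((k : ℚ) * M + 2) ∧
      (gramL k M).det = (k : ℚ) ^ 3 * ((k : ℚ) * M + 2) ∧
      (gramL k M).det = (k : ℚ) ^ 2 * (gramM k M).det := by
  obtain ⟨n, rfl⟩ : ∃ n, k = n + 2 := ⟨k - 2, by omega⟩
  push_cast
  refine ⟨det_gramM_add_two n M, det_gramL_add_two n M, ?_⟩
  rw [det_gramL_add_two, det_gramM_add_two]
  ring

/-- **Determinants of the maximally symmetric lattice and its sublattice `L`.**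
For `k ≥ 2` and `M ≥ 1` odd, `det G = k(kM+2)`, while the block-diagonal Gram
matrix `G_L = diag(k(kM+2)) ⊕ C ⊕ C` satisfies `det G_L = k³(kM+2) = k² · det G`;
hence `|L| = k²|Γ|`, i.e. `L ⊂ Γ` has index `k`. -/
theorem gram_determinants (k M : ℕ) (hk : 2 ≤ k) (hM : 1 ≤ M) (hModd : Odd M) :
    (gramM k M).det = (k : ℚ) * ((k : ℚ) * M + 2) ∧
      (gramL k M).det = (k : ℚ) ^ 3 * ((k : ℚ) * M + 2) ∧
      (gramL k M).det = (k : ℚ) ^ 2 * (gramM k M).det :=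
  gram_determinants_general k M hk
end

section
/- Fix integers k ≥ 1, n ≥ 1 and N = kn, and let P, Sym P, P′, Sym P′ be as in the context. Let φ : ℤ[X_0,…,X_{N−1}] → ℤ[W, X_k,…,X_{N−1}] be the substitution homomorphism sending X_i ↦ W for 0 ≤ i ≤ k−1 and X_i ↦ X_i for k ≤ i ≤ N−1. Then φ(Sym P) = k! · n^k · (∏_{i=k}^{N−1} (W − X_i)²) · Sym P′. (This is the exact cluster factorization of the symmetrized generalized-(331) ground-state wave function of the ℤ_k-parafermion Hall state when k electron coordinates are set equal.) -/
open MvPolynomial Finset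


/-- The generalized-(331) ground-state polynomial on an index set of size `N = kn`:
`P = ∏ (X_i − X_j)²` over all pairs `i < j` with `i ≡ j (mod k)`
(electrons of the same colour). -/
noncomputable def colourP (k N : ℕ) : MvPolynomial (Fin N) ℤ :=
  ∏ p ∈ Finset.univ.filter
      (fun p : Fin N × Fin N => p.1 < p.2 ∧ (p.1 : ℕ) % k = (p.2 : ℕ) % k),
    (X p.1 - X p.2) ^ 2

/-- Its symmetrization `Sym P = Σ_{σ ∈ S_N} σ·P`. -/
noncomputable def symColourP (k N : ℕ) : MvPolynomial (Fin N) ℤ :=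
  ∑ σ : Equiv.Perm (Fin N), rename (⇑σ) (colourP k N)

/-- The analogous polynomial `P′ = ∏ (X_i − X_j)²` over pairs
`k ≤ i < j ≤ N−1` with `i ≡ j (mod k)`. -/
noncomputable def colourP' (k N : ℕ) : MvPolynomial (Fin N) ℤ :=
  ∏ p ∈ Finset.univ.filter
      (fun p : Fin N × Fin N =>
        k ≤ (p.1 : ℕ) ∧ p.1 < p.2 ∧ (p.1 : ℕ) % k = (p.2 : ℕ) % k),
    (X p.1 - X p.2) ^ 2

/-- `Sym P′`: the sum of `σ·P′` over all permutations `σ` of the index set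
`{k,…,N−1}` (extended by the identity on `{0,…,k−1}`). -/
noncomputable def symColourP' (k N : ℕ) : MvPolynomial (Fin N) ℤ :=
  ∑ σ : Equiv.Perm {i : Fin N // k ≤ (i : ℕ)},
    rename (fun i : Fin N => if h : k ≤ (i : ℕ) then (σ ⟨i, h⟩ : Fin N) else i)
      (colourP' k N)

namespace ClusterAux

/-- swap 0 and c at the nat level -/
def swapNat (c b : ℕ) : ℕ := if b = 0 then c else if b = c then 0 else b

lemma swapNat_invol (c b : ℕ) : swapNat c (swapNat c b) = b := by
  unfold swapNat; split_ifs <;> omega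

lemma swapNat_lt {c b m : ℕ} (hc : c < m) (hb : b < m) : swapNat c b < m := by
  unfold swapNat; split_ifs <;> omega

lemma swapNat_eq_zero_iff (c b : ℕ) : swapNat c b = 0 ↔ b = c := by
  unfold swapNat; split_ifs <;> omega

lemma swapNat_eq_self_iff (c b : ℕ) : swapNat c b = c ↔ b = 0 := by
  unfold swapNat; split_ifs <;> omega

variable {k n : ℕ}

lemma idx_lt (hr : ∀ h : 0 < k, True) : True := trivial

/-- the index `k*b + r` as an element of `Fin (k*n)` -/
lemma mk_lt {r b : ℕ} (hr : r < k) (hb : b < n) : r + k * b < k * n := by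
  calc r + k * b < k + k * b := by omega
  _ = k * (b + 1) := by ring
  _ ≤ k * n := Nat.mul_le_mul_left k hb

/-- Swap, within each colour class, the element in row `0` with the element in row `a r`. -/
def swapIdx (hk : 0 < k) (a : Fin k → Fin n) (i : Fin (k * n)) : Fin (k * n) :=
  ⟨(i : ℕ) % k + k * swapNat (a ⟨(i : ℕ) % k, Nat.mod_lt _ hk⟩) ((i : ℕ) / k),
    mk_lt (Nat.mod_lt _ hk)
      (swapNat_lt (a _).2 (Nat.div_lt_iff_lt_mul hk |>.mpr (by rw [Nat.mul_comm n k]; exact i.2)))⟩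

lemma swapIdx_val (hk : 0 < k) (a : Fin k → Fin n) (i : Fin (k * n))
    (h : (i : ℕ) % k < k) :
    (swapIdx hk a i : ℕ) = (i : ℕ) % k + k * swapNat (a ⟨(i : ℕ) % k, h⟩) ((i : ℕ) / k) := rfl

lemma swapIdx_mod (hk : 0 < k) (a : Fin k → Fin n) (i : Fin (k * n)) :
    (swapIdx hk a i : ℕ) % k = (i : ℕ) % k := by
  rw [swapIdx_val hk a i (Nat.mod_lt _ hk), Nat.add_mul_mod_self_left,
    Nat.mod_mod_of_dvd _ dvd_rfl]

lemma swapIdx_div (hk : 0 < k) (a : Fin k → Fin n) (i : Fin (k * n))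
    (h : (i : ℕ) % k < k) :
    (swapIdx hk a i : ℕ) / k = swapNat (a ⟨(i : ℕ) % k, h⟩) ((i : ℕ) / k) := by
  rw [swapIdx_val hk a i h, Nat.add_mul_div_left _ _ hk, Nat.div_eq_of_lt h, Nat.zero_add]

lemma swapIdx_invol (hk : 0 < k) (a : Fin k → Fin n) (i : Fin (k * n)) :
    swapIdx hk a (swapIdx hk a i) = i := by
  apply Fin.ext
  rw [swapIdx_val hk a _ (Nat.mod_lt _ hk)]
  simp only [swapIdx_mod, swapIdx_div hk a i (Nat.mod_lt _ hk)]
  rw [swapNat_invol, Nat.mod_add_div]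

/-- `swapIdx` as a permutation. -/
def rowSwap (hk : 0 < k) (a : Fin k → Fin n) : Equiv.Perm (Fin (k * n)) :=
  ⟨swapIdx hk a, swapIdx hk a, swapIdx_invol hk a, swapIdx_invol hk a⟩




-- scratch: embedding and perms
def embLow (hn : 0 < n) : Fin k ≃ {i : Fin (k * n) // (i : ℕ) < k} where
  toFun j := ⟨⟨j, lt_of_lt_of_le j.2 (Nat.le_mul_of_pos_right k hn)⟩, j.2⟩
  invFun i := ⟨(i : Fin (k*n)), i.2⟩
  left_inv j := rfl
  right_inv i := rfl

noncomputable def lowPerm (hn : 0 < n) (π : Equiv.Perm (Fin k)) : Equiv.Perm (Fin (k * n)) :=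
  π.extendDomain (embLow hn)

noncomputable def highPerm (τ : Equiv.Perm {i : Fin (k * n) // k ≤ (i : ℕ)}) :
    Equiv.Perm (Fin (k * n)) :=
  τ.extendDomain (Equiv.refl _)

lemma lowPerm_apply_lt (hn : 0 < n) (π : Equiv.Perm (Fin k)) (i : Fin (k * n))
    (h : (i : ℕ) < k) : lowPerm hn π i = ⟨(π ⟨i, h⟩ : ℕ),
      lt_of_lt_of_le (π ⟨i, h⟩).2 (Nat.le_mul_of_pos_right k hn)⟩ := by
  rw [lowPerm, Equiv.Perm.extendDomain_apply_subtype (p := fun i : Fin (k*n) => (i:ℕ) < k) _ _ h]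
  rfl

lemma lowPerm_apply_ge (hn : 0 < n) (π : Equiv.Perm (Fin k)) (i : Fin (k * n))
    (h : ¬ (i : ℕ) < k) : lowPerm hn π i = i :=
  Equiv.Perm.extendDomain_apply_not_subtype _ _ h

lemma highPerm_apply_ge (τ : Equiv.Perm {i : Fin (k * n) // k ≤ (i : ℕ)}) (i : Fin (k * n))
    (h : k ≤ (i : ℕ)) : highPerm τ i = (τ ⟨i, h⟩ : Fin (k * n)) := by
  rw [highPerm, Equiv.Perm.extendDomain_apply_subtype (p := fun i : Fin (k*n) => k ≤ (i:ℕ)) _ _ h]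
  rfl

lemma highPerm_apply_lt (τ : Equiv.Perm {i : Fin (k * n) // k ≤ (i : ℕ)}) (i : Fin (k * n))
    (h : ¬ k ≤ (i : ℕ)) : highPerm τ i = i :=
  Equiv.Perm.extendDomain_apply_not_subtype _ _ h



/-- `i` is a "chosen" index: its row equals `a` of its colour. -/
def isCh (hk : 0 < k) (a : Fin k → Fin n) (i : Fin (k * n)) : Prop :=
  (i : ℕ) / k = (a ⟨(i : ℕ) % k, Nat.mod_lt _ hk⟩ : ℕ)

instance (hk : 0 < k) (a : Fin k → Fin n) (i : Fin (k * n)) : Decidable (isCh hk a i) := by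
  unfold isCh; infer_instance

lemma lt_iff_div (hk : 0 < k) (i : Fin (k * n)) : (i : ℕ) < k ↔ (i : ℕ) / k = 0 := by
  constructor
  · exact Nat.div_eq_of_lt
  · intro h
    have h2 := Nat.mod_add_div (i : ℕ) k
    rw [h, Nat.mul_zero] at h2
    have := Nat.mod_lt (i : ℕ) hk
    omega

lemma swapIdx_ge_iff (hk : 0 < k) (a : Fin k → Fin n) (i : Fin (k * n)) :
    k ≤ (swapIdx hk a i : ℕ) ↔ ¬ isCh hk a i := by
  rw [isCh, ← Nat.not_lt]
  apply not_congr
  rw [lt_iff_div hk (swapIdx hk a i), swapIdx_div hk a i (Nat.mod_lt _ hk),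
    swapNat_eq_zero_iff]

lemma isCh_swapIdx_iff (hk : 0 < k) (a : Fin k → Fin n) (i : Fin (k * n)) :
    isCh hk a (swapIdx hk a i) ↔ (i : ℕ) < k := by
  rw [isCh]
  have hm : ((swapIdx hk a i : ℕ) % k) = (i : ℕ) % k := swapIdx_mod hk a i
  simp only [hm, swapIdx_div hk a i (Nat.mod_lt _ hk)]
  rw [swapNat_eq_self_iff, lt_iff_div hk]


noncomputable def buildPerm (hk : 0 < k) (hn : 0 < n) (π : Equiv.Perm (Fin k))
    (a : Fin k → Fin n) (τ : Equiv.Perm {i : Fin (k * n) // k ≤ (i : ℕ)}) :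
    Equiv.Perm (Fin (k * n)) :=
  (rowSwap hk a).trans ((lowPerm hn π).trans (highPerm τ))

lemma buildPerm_apply (hk : 0 < k) (hn : 0 < n) (π : Equiv.Perm (Fin k))
    (a : Fin k → Fin n) (τ : Equiv.Perm {i : Fin (k * n) // k ≤ (i : ℕ)}) (i : Fin (k * n)) :
    buildPerm hk hn π a τ i = highPerm τ (lowPerm hn π (swapIdx hk a i)) := rfl

/-- chosen indices go to the low block, via `π`. -/
lemma buildPerm_apply_ch (hk : 0 < k) (hn : 0 < n) (π : Equiv.Perm (Fin k))
    (a : Fin k → Fin n) (τ : Equiv.Perm {i : Fin (k * n) // k ≤ (i : ℕ)}) (i : Fin (k * n))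
    (h : isCh hk a i) :
    buildPerm hk hn π a τ i = ⟨(π ⟨(i : ℕ) % k, Nat.mod_lt _ hk⟩ : ℕ),
      lt_of_lt_of_le (π _).2 (Nat.le_mul_of_pos_right k hn)⟩ := by
  have hlt : (swapIdx hk a i : ℕ) < k :=
    Nat.lt_of_not_le (fun hge => ((swapIdx_ge_iff hk a i).mp hge) h)
  have hs : (swapIdx hk a i : ℕ) = (i : ℕ) % k := by
    have h2 := Nat.mod_add_div ((swapIdx hk a i : ℕ)) k
    have h3 : (swapIdx hk a i : ℕ) / k = 0 := (lt_iff_div hk _).mp hlt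
    rw [h3, Nat.mul_zero] at h2
    rw [← h2, swapIdx_mod]
    omega
  rw [buildPerm_apply, lowPerm_apply_lt hn π _ hlt]
  have hπlt : ((π ⟨(swapIdx hk a i : ℕ), hlt⟩ : Fin k) : ℕ) < k := (π _).2
  rw [highPerm_apply_lt τ _ (by simp only [Nat.not_le]; exact hπlt)]
  apply Fin.ext
  simp only [hs]

/-- non-chosen indices go to the high block, via `τ ∘ swapIdx`. -/
lemma buildPerm_apply_nch (hk : 0 < k) (hn : 0 < n) (π : Equiv.Perm (Fin k))
    (a : Fin k → Fin n) (τ : Equiv.Perm {i : Fin (k * n) // k ≤ (i : ℕ)}) (i : Fin (k * n))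
    (h : ¬ isCh hk a i) :
    buildPerm hk hn π a τ i = (τ ⟨swapIdx hk a i, (swapIdx_ge_iff hk a i).mpr h⟩ : Fin (k * n)) := by
  have hge : k ≤ (swapIdx hk a i : ℕ) := (swapIdx_ge_iff hk a i).mpr h
  rw [buildPerm_apply, lowPerm_apply_ge hn π _ (by omega), highPerm_apply_ge τ _ hge]

/-- `buildPerm i < k` iff `i` is chosen. -/
lemma buildPerm_lt_iff (hk : 0 < k) (hn : 0 < n) (π : Equiv.Perm (Fin k))
    (a : Fin k → Fin n) (τ : Equiv.Perm {i : Fin (k * n) // k ≤ (i : ℕ)}) (i : Fin (k * n)) :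
    (buildPerm hk hn π a τ i : ℕ) < k ↔ isCh hk a i := by
  constructor
  · intro hlt
    by_contra h
    rw [buildPerm_apply_nch hk hn π a τ i h] at hlt
    have := (τ ⟨swapIdx hk a i, (swapIdx_ge_iff hk a i).mpr h⟩).2
    omega
  · intro h
    rw [buildPerm_apply_ch hk hn π a τ i h]
    exact (π _).2

/-- The chosen index of colour `r`. -/
def chIdx (hk : 0 < k) (a : Fin k → Fin n) (r : Fin k) : Fin (k * n) :=
  ⟨(r : ℕ) + k * (a r : ℕ), mk_lt r.2 (a r).2⟩

lemma chIdx_mod (hk : 0 < k) (a : Fin k → Fin n) (r : Fin k) :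
    ((chIdx hk a r : Fin (k*n)) : ℕ) % k = (r : ℕ) := by
  show ((r : ℕ) + k * (a r : ℕ)) % k = r
  rw [Nat.add_mul_mod_self_left, Nat.mod_eq_of_lt r.2]

lemma chIdx_div (hk : 0 < k) (a : Fin k → Fin n) (r : Fin k) :
    ((chIdx hk a r : Fin (k*n)) : ℕ) / k = (a r : ℕ) := by
  show ((r : ℕ) + k * (a r : ℕ)) / k = a r
  rw [Nat.add_mul_div_left _ _ hk, Nat.div_eq_of_lt r.2, Nat.zero_add]

lemma isCh_chIdx (hk : 0 < k) (a : Fin k → Fin n) (r : Fin k) :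
    isCh hk a (chIdx hk a r) := by
  rw [isCh]
  have h1 := chIdx_mod hk a r
  have h2 := chIdx_div hk a r
  rw [h2]
  have hre : (⟨((chIdx hk a r : Fin (k*n)) : ℕ) % k, Nat.mod_lt _ hk⟩ : Fin k) = r := Fin.ext h1
  rw [hre]

lemma eq_chIdx_of_isCh (hk : 0 < k) (a : Fin k → Fin n) (i : Fin (k * n))
    (h : isCh hk a i) : i = chIdx hk a ⟨(i : ℕ) % k, Nat.mod_lt _ hk⟩ := by
  apply Fin.ext
  show (i : ℕ) = (i : ℕ) % k + k * (a ⟨(i : ℕ) % k, Nat.mod_lt _ hk⟩ : ℕ)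
  rw [isCh] at h
  rw [← h, Nat.mod_add_div]

/-- two chosen indices of the same colour are equal -/
lemma isCh_unique (hk : 0 < k) (a : Fin k → Fin n) (i j : Fin (k * n))
    (hi : isCh hk a i) (hj : isCh hk a j) (hc : (i : ℕ) % k = (j : ℕ) % k) : i = j := by
  rw [eq_chIdx_of_isCh hk a i hi, eq_chIdx_of_isCh hk a j hj]
  congr 1
  exact Fin.ext hc


noncomputable section

def z0 (hk : 0 < k) (hn : 0 < n) : Fin (k * n) := ⟨0, Nat.mul_pos hk hn⟩

def gf (hk : 0 < k) (hn : 0 < n) (i : Fin (k * n)) : Fin (k * n) :=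
  if (i : ℕ) < k then z0 hk hn else i

def termOf (hk : 0 < k) (hn : 0 < n) (σ : Equiv.Perm (Fin (k * n))) :
    MvPolynomial (Fin (k * n)) ℤ :=
  ∏ p ∈ Finset.univ.filter
      (fun p : Fin (k * n) × Fin (k * n) => p.1 < p.2 ∧ (p.1 : ℕ) % k = (p.2 : ℕ) % k),
    (X (gf hk hn (σ p.1)) - X (gf hk hn (σ p.2))) ^ 2

lemma aeval_rename_eq_termOf (hk : 0 < k) (hn : 0 < n) (σ : Equiv.Perm (Fin (k * n))) :
    aeval (fun i : Fin (k * n) =>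
        if (i : ℕ) < k then (X (z0 hk hn) : MvPolynomial (Fin (k * n)) ℤ) else X i)
      (rename (⇑σ) (colourP k (k * n))) = termOf hk hn σ := by
  rw [aeval_rename, colourP, map_prod, termOf]
  apply Finset.prod_congr rfl
  intro p hp
  rw [map_pow, map_sub]
  simp only [Function.comp_apply, aeval_X, gf]
  rw [apply_ite (X (R := ℤ)), apply_ite (X (R := ℤ))]

def Valid (σ : Equiv.Perm (Fin (k * n))) : Prop :=
  ∀ i j : Fin (k * n), (i : ℕ) % k = (j : ℕ) % k →
    ((σ i : Fin (k * n)) : ℕ) < k → ((σ j : Fin (k * n)) : ℕ) < k → i = j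

lemma termOf_eq_zero (hk : 0 < k) (hn : 0 < n) (σ : Equiv.Perm (Fin (k * n)))
    (h : ¬ Valid σ) : termOf hk hn σ = 0 := by
  rw [Valid] at h
  push_neg at h
  obtain ⟨i, j, hcol, hi, hj, hne⟩ := h
  rcases lt_or_gt_of_ne hne with hlt | hlt
  · apply Finset.prod_eq_zero (i := (i, j))
    · simp only [Finset.mem_filter, Finset.mem_univ, true_and]
      exact ⟨hlt, hcol⟩
    · simp only [gf, if_pos hi, if_pos hj]
      ring
  · apply Finset.prod_eq_zero (i := (j, i))
    · simp only [Finset.mem_filter, Finset.mem_univ, true_and]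
      exact ⟨hlt, hcol.symm⟩
    · simp only [gf, if_pos hi, if_pos hj]
      ring

end


section Main
variable {k n : ℕ}

def sortSw (hk : 0 < k) (a : Fin k → Fin n) (p : Fin (k * n) × Fin (k * n)) :
    Fin (k * n) × Fin (k * n) :=
  if ((swapIdx hk a p.1 : Fin (k*n)) : ℕ) < ((swapIdx hk a p.2 : Fin (k*n)) : ℕ) then
    (swapIdx hk a p.1, swapIdx hk a p.2)
  else (swapIdx hk a p.2, swapIdx hk a p.1)

lemma sortSw_sortSw (hk : 0 < k) (a : Fin k → Fin n) (p : Fin (k * n) × Fin (k * n))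
    (hlt : ((p.1 : Fin (k*n)) : ℕ) < ((p.2 : Fin (k*n)) : ℕ)) :
    sortSw hk a (sortSw hk a p) = p := by
  by_cases h : ((swapIdx hk a p.1 : Fin (k*n)) : ℕ) < ((swapIdx hk a p.2 : Fin (k*n)) : ℕ)
  · have hinner : sortSw hk a p = (swapIdx hk a p.1, swapIdx hk a p.2) := by
      rw [sortSw, if_pos h]
    rw [hinner, sortSw]
    dsimp only
    simp only [swapIdx_invol]
    rw [if_pos hlt]
  · have hinner : sortSw hk a p = (swapIdx hk a p.2, swapIdx hk a p.1) := by
      rw [sortSw, if_neg h]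
    rw [hinner, sortSw]
    dsimp only
    simp only [swapIdx_invol]
    rw [if_neg (by omega)]

def mixOther (hk : 0 < k) (a : Fin k → Fin n) (σ : Equiv.Perm (Fin (k * n)))
    (p : Fin (k * n) × Fin (k * n)) : Fin (k * n) :=
  σ (if isCh hk a p.1 then p.2 else p.1)

def mixInv (hk : 0 < k) (a : Fin k → Fin n) (σ : Equiv.Perm (Fin (k * n)))
    (m : Fin (k * n)) : Fin (k * n) × Fin (k * n) :=
  if ((chIdx hk a ⟨((σ.symm m : Fin (k*n)) : ℕ) % k, Nat.mod_lt _ hk⟩ : Fin (k*n)) : ℕ) <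
      ((σ.symm m : Fin (k*n)) : ℕ) then
    (chIdx hk a ⟨((σ.symm m : Fin (k*n)) : ℕ) % k, Nat.mod_lt _ hk⟩, σ.symm m)
  else (σ.symm m, chIdx hk a ⟨((σ.symm m : Fin (k*n)) : ℕ) % k, Nat.mod_lt _ hk⟩)

lemma termOf_build (hk : 0 < k) (hn : 0 < n) (π : Equiv.Perm (Fin k))
    (a : Fin k → Fin n) (τ : Equiv.Perm {i : Fin (k * n) // k ≤ (i : ℕ)}) :
    termOf hk hn (buildPerm hk hn π a τ) =
      (∏ i ∈ Finset.univ.filter (fun i : Fin (k * n) => k ≤ (i : ℕ)),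
        (X (z0 hk hn) - X i) ^ 2) *
      rename (fun i : Fin (k * n) => if h : k ≤ (i : ℕ) then (τ ⟨i, h⟩ : Fin (k * n)) else i)
        (colourP' k (k * n)) := by
  set σ := buildPerm hk hn π a τ with hσdef
  set ef : Fin (k * n) → Fin (k * n) :=
    fun i => if h : k ≤ (i : ℕ) then (τ ⟨i, h⟩ : Fin (k * n)) else i with hef
  have hltiff : ∀ i, ((σ i : Fin (k*n)) : ℕ) < k ↔ isCh hk a i :=
    buildPerm_lt_iff hk hn π a τ
  have hnch : ∀ i, ∀ h : ¬ isCh hk a i,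
      σ i = (τ ⟨swapIdx hk a i, (swapIdx_ge_iff hk a i).mpr h⟩ : Fin (k * n)) :=
    fun i h => buildPerm_apply_nch hk hn π a τ i h
  have hef_app : ∀ i, ∀ _ : ¬ isCh hk a i, ef (swapIdx hk a i) = σ i := by
    intro i h
    simp only [hef]
    rw [dif_pos ((swapIdx_ge_iff hk a i).mpr h), hnch i h]
  have hgf_ch : ∀ i, ∀ h : isCh hk a i, gf hk hn (σ i) = z0 hk hn := by
    intro i h; rw [gf, if_pos ((hltiff i).mpr h)]
  have hgf_nch : ∀ i, ∀ h : ¬ isCh hk a i, gf hk hn (σ i) = σ i := by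
    intro i h; rw [gf, if_neg (fun hl => h ((hltiff i).mp hl))]
  have hrename : rename ef (colourP' k (k * n)) =
      ∏ q ∈ Finset.univ.filter
        (fun p : Fin (k*n) × Fin (k*n) =>
          k ≤ (p.1 : ℕ) ∧ p.1 < p.2 ∧ (p.1 : ℕ) % k = (p.2 : ℕ) % k),
        (X (ef q.1) - X (ef q.2)) ^ 2 := by
    rw [colourP', map_prod]
    refine Finset.prod_congr rfl (fun q hq => ?_)
    rw [map_pow, map_sub, rename_X, rename_X]
  rw [hrename, termOf]
  rw [← Finset.prod_filter_mul_prod_filter_not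
    (Finset.univ.filter (fun p : Fin (k*n) × Fin (k*n) =>
      p.1 < p.2 ∧ (p.1 : ℕ) % k = (p.2 : ℕ) % k))
    (fun p => isCh hk a p.1 ∨ isCh hk a p.2)]
  congr 1
  · -- mixed pairs give the prefactor
    apply Finset.prod_nbij' (i := mixOther hk a σ) (j := mixInv hk a σ)
    · intro p hp
      simp only [Finset.mem_filter, Finset.mem_univ, true_and] at hp ⊢
      obtain ⟨⟨hlt, hcol⟩, hch⟩ := hp
      rw [mixOther]
      by_cases h1 : isCh hk a p.1
      · rw [if_pos h1]
        have h2 : ¬ isCh hk a p.2 := fun h2 =>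
          absurd (isCh_unique hk a p.1 p.2 h1 h2 hcol) (ne_of_lt hlt)
        exact Nat.le_of_not_lt (fun hl => h2 ((hltiff p.2).mp hl))
      · rw [if_neg h1]
        exact Nat.le_of_not_lt (fun hl => h1 ((hltiff p.1).mp hl))
    · intro m hm
      simp only [Finset.mem_filter, Finset.mem_univ, true_and] at hm ⊢
      have hi0 : ¬ isCh hk a (σ.symm m) := by
        intro hch
        have h := (hltiff (σ.symm m)).mpr hch
        rw [Equiv.apply_symm_apply] at h
        omega
      have hc : isCh hk a (chIdx hk a ⟨((σ.symm m : Fin (k*n)) : ℕ) % k, Nat.mod_lt _ hk⟩) :=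
        isCh_chIdx hk a _
      have hcol : ((chIdx hk a ⟨((σ.symm m : Fin (k*n)) : ℕ) % k, Nat.mod_lt _ hk⟩ : Fin (k*n)) : ℕ) % k
          = ((σ.symm m : Fin (k*n)) : ℕ) % k := by
        rw [chIdx_mod]
      have hne : ((chIdx hk a ⟨((σ.symm m : Fin (k*n)) : ℕ) % k, Nat.mod_lt _ hk⟩ : Fin (k*n)) : ℕ)
          ≠ ((σ.symm m : Fin (k*n)) : ℕ) := by
        intro h
        exact hi0 (by rwa [Fin.ext h] at hc)
      rw [mixInv]
      split_ifs with hsw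
      · exact ⟨⟨Fin.lt_def.mpr hsw, hcol⟩, Or.inl hc⟩
      · exact ⟨⟨Fin.lt_def.mpr (Nat.lt_of_le_of_ne (Nat.le_of_not_lt hsw) (Ne.symm hne)), hcol.symm⟩, Or.inr hc⟩
    · intro p hp
      simp only [Finset.mem_filter, Finset.mem_univ, true_and] at hp
      obtain ⟨⟨hlt, hcol⟩, hch⟩ := hp
      rw [mixOther]
      by_cases h1 : isCh hk a p.1
      · rw [if_pos h1, mixInv]
        simp only [Equiv.symm_apply_apply]
        have hcp : chIdx hk a ⟨((p.2 : Fin (k*n)) : ℕ) % k, Nat.mod_lt _ hk⟩ = p.1 := by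
          have h := eq_chIdx_of_isCh hk a p.1 h1
          have hr : (⟨((p.2 : Fin (k*n)) : ℕ) % k, Nat.mod_lt _ hk⟩ : Fin k)
              = ⟨((p.1 : Fin (k*n)) : ℕ) % k, Nat.mod_lt _ hk⟩ := Fin.ext hcol.symm
          rw [hr, ← h]
        rw [hcp, if_pos (Fin.lt_def.mp hlt)]
      · rw [if_neg h1, mixInv]
        have h2 : isCh hk a p.2 := hch.resolve_left h1
        simp only [Equiv.symm_apply_apply]
        have hcp : chIdx hk a ⟨((p.1 : Fin (k*n)) : ℕ) % k, Nat.mod_lt _ hk⟩ = p.2 := by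
          have h := eq_chIdx_of_isCh hk a p.2 h2
          have hr : (⟨((p.1 : Fin (k*n)) : ℕ) % k, Nat.mod_lt _ hk⟩ : Fin k)
              = ⟨((p.2 : Fin (k*n)) : ℕ) % k, Nat.mod_lt _ hk⟩ := Fin.ext hcol
          rw [hr, ← h]
        rw [hcp, if_neg (by have := Fin.lt_def.mp hlt; omega)]
    · intro m hm
      simp only [Finset.mem_filter, Finset.mem_univ, true_and] at hm
      have hi0 : ¬ isCh hk a (σ.symm m) := by
        intro hch
        have h := (hltiff (σ.symm m)).mpr hch
        rw [Equiv.apply_symm_apply] at h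
        omega
      have hc : isCh hk a (chIdx hk a ⟨((σ.symm m : Fin (k*n)) : ℕ) % k, Nat.mod_lt _ hk⟩) :=
        isCh_chIdx hk a _
      rw [mixInv]
      split_ifs with hsw
      · rw [mixOther]
        dsimp only
        rw [if_pos hc]
        exact Equiv.apply_symm_apply σ m
      · rw [mixOther]
        dsimp only
        rw [if_neg hi0]
        exact Equiv.apply_symm_apply σ m
    · intro p hp
      simp only [Finset.mem_filter, Finset.mem_univ, true_and] at hp
      obtain ⟨⟨hlt, hcol⟩, hch⟩ := hp
      rw [mixOther]
      by_cases h1 : isCh hk a p.1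
      · have h2 : ¬ isCh hk a p.2 := fun h2 =>
          absurd (isCh_unique hk a p.1 p.2 h1 h2 hcol) (ne_of_lt hlt)
        rw [if_pos h1, hgf_ch p.1 h1, hgf_nch p.2 h2]
      · have h2 : isCh hk a p.2 := hch.resolve_left h1
        rw [if_neg h1, hgf_nch p.1 h1, hgf_ch p.2 h2]
        ring
  · -- pure pairs give the renamed `colourP'`
    apply Finset.prod_nbij' (i := sortSw hk a) (j := sortSw hk a)
    · intro p hp
      simp only [Finset.mem_filter, Finset.mem_univ, true_and] at hp ⊢
      obtain ⟨⟨hlt, hcol⟩, hch⟩ := hp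
      push_neg at hch
      obtain ⟨h1, h2⟩ := hch
      have hge1 : k ≤ ((swapIdx hk a p.1 : Fin (k*n)) : ℕ) := (swapIdx_ge_iff hk a p.1).mpr h1
      have hge2 : k ≤ ((swapIdx hk a p.2 : Fin (k*n)) : ℕ) := (swapIdx_ge_iff hk a p.2).mpr h2
      have hcol' : ((swapIdx hk a p.1 : Fin (k*n)) : ℕ) % k
          = ((swapIdx hk a p.2 : Fin (k*n)) : ℕ) % k := by
        rw [swapIdx_mod, swapIdx_mod, hcol]
      have hne : ((swapIdx hk a p.1 : Fin (k*n)) : ℕ) ≠ ((swapIdx hk a p.2 : Fin (k*n)) : ℕ) := by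
        intro h
        have h' := congrArg (swapIdx hk a) (Fin.ext h :
          swapIdx hk a p.1 = swapIdx hk a p.2)
        rw [swapIdx_invol, swapIdx_invol] at h'
        exact (ne_of_lt hlt) h'
      rw [sortSw]
      split_ifs with hs
      · exact ⟨hge1, Fin.lt_def.mpr hs, hcol'⟩
      · exact ⟨hge2, Fin.lt_def.mpr (Nat.lt_of_le_of_ne (Nat.le_of_not_lt hs) (Ne.symm hne)), hcol'.symm⟩
    · intro q hq
      simp only [Finset.mem_filter, Finset.mem_univ, true_and] at hq ⊢
      obtain ⟨hge1, hlt, hcol⟩ := hq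
      have hltv := Fin.lt_def.mp hlt
      have hge2 : k ≤ ((q.2 : Fin (k*n)) : ℕ) := by omega
      have h1 : ¬ isCh hk a (swapIdx hk a q.1) := by
        rw [isCh_swapIdx_iff]; omega
      have h2 : ¬ isCh hk a (swapIdx hk a q.2) := by
        rw [isCh_swapIdx_iff]; omega
      have hcol' : ((swapIdx hk a q.1 : Fin (k*n)) : ℕ) % k
          = ((swapIdx hk a q.2 : Fin (k*n)) : ℕ) % k := by
        rw [swapIdx_mod, swapIdx_mod, hcol]
      have hne : ((swapIdx hk a q.1 : Fin (k*n)) : ℕ) ≠ ((swapIdx hk a q.2 : Fin (k*n)) : ℕ) := by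
        intro h
        have h' := congrArg (swapIdx hk a) (Fin.ext h :
          swapIdx hk a q.1 = swapIdx hk a q.2)
        rw [swapIdx_invol, swapIdx_invol] at h'
        exact (ne_of_lt hlt) h'
      rw [sortSw]
      split_ifs with hs
      · exact ⟨⟨Fin.lt_def.mpr hs, hcol'⟩, by push_neg; exact ⟨h1, h2⟩⟩
      · exact ⟨⟨Fin.lt_def.mpr (Nat.lt_of_le_of_ne (Nat.le_of_not_lt hs) (Ne.symm hne)), hcol'.symm⟩, by push_neg; exact ⟨h2, h1⟩⟩
    · intro p hp
      simp only [Finset.mem_filter, Finset.mem_univ, true_and] at hp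
      exact sortSw_sortSw hk a p (Fin.lt_def.mp hp.1.1)
    · intro q hq
      simp only [Finset.mem_filter, Finset.mem_univ, true_and] at hq
      exact sortSw_sortSw hk a q (Fin.lt_def.mp hq.2.1)
    · intro p hp
      simp only [Finset.mem_filter, Finset.mem_univ, true_and] at hp
      obtain ⟨⟨hlt, hcol⟩, hch⟩ := hp
      push_neg at hch
      obtain ⟨h1, h2⟩ := hch
      rw [hgf_nch p.1 h1, hgf_nch p.2 h2, sortSw]
      split_ifs with hs
      · dsimp only
        rw [hef_app p.1 h1, hef_app p.2 h2]
      · dsimp only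
        rw [hef_app p.1 h1, hef_app p.2 h2]
        ring

end Main


section Bij
variable {k n : ℕ}

lemma valid_build (hk : 0 < k) (hn : 0 < n) (π : Equiv.Perm (Fin k)) (a : Fin k → Fin n)
    (τ : Equiv.Perm {i : Fin (k * n) // k ≤ (i : ℕ)}) : Valid (buildPerm hk hn π a τ) := by
  intro i j hcol hi hj
  exact isCh_unique hk a i j ((buildPerm_lt_iff hk hn π a τ i).mp hi)
    ((buildPerm_lt_iff hk hn π a τ j).mp hj) hcol

lemma build_inj (hk : 0 < k) (hn : 0 < n) (π₁ π₂ : Equiv.Perm (Fin k))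
    (a₁ a₂ : Fin k → Fin n) (τ₁ τ₂ : Equiv.Perm {i : Fin (k * n) // k ≤ (i : ℕ)})
    (h : buildPerm hk hn π₁ a₁ τ₁ = buildPerm hk hn π₂ a₂ τ₂) :
    π₁ = π₂ ∧ a₁ = a₂ ∧ τ₁ = τ₂ := by
  have ha : a₁ = a₂ := by
    funext r
    have hch : isCh hk a₁ (chIdx hk a₁ r) := isCh_chIdx hk a₁ r
    have hlt : ((buildPerm hk hn π₁ a₁ τ₁ (chIdx hk a₁ r) : Fin (k*n)) : ℕ) < k :=
      (buildPerm_lt_iff hk hn π₁ a₁ τ₁ _).mpr hch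
    rw [h] at hlt
    have hch2 : isCh hk a₂ (chIdx hk a₁ r) := (buildPerm_lt_iff hk hn π₂ a₂ τ₂ _).mp hlt
    rw [isCh] at hch2
    apply Fin.ext
    rw [chIdx_div hk a₁ r] at hch2
    rw [hch2]
    have hr : (⟨((chIdx hk a₁ r : Fin (k*n)) : ℕ) % k, Nat.mod_lt _ hk⟩ : Fin k) = r :=
      Fin.ext (chIdx_mod hk a₁ r)
    rw [hr]
  subst ha
  have hπ : π₁ = π₂ := by
    apply Equiv.ext; intro r
    have h1 := buildPerm_apply_ch hk hn π₁ a₁ τ₁ (chIdx hk a₁ r) (isCh_chIdx hk a₁ r)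
    have h2 := buildPerm_apply_ch hk hn π₂ a₁ τ₂ (chIdx hk a₁ r) (isCh_chIdx hk a₁ r)
    rw [h] at h1
    rw [h1] at h2
    have hval := congrArg Fin.val h2
    have hr : (⟨((chIdx hk a₁ r : Fin (k*n)) : ℕ) % k, Nat.mod_lt _ hk⟩ : Fin k) = r :=
      Fin.ext (chIdx_mod hk a₁ r)
    rw [hr] at hval
    exact Fin.ext hval
  have hτ : τ₁ = τ₂ := by
    apply Equiv.ext; intro x
    have hx : ¬ isCh hk a₁ (swapIdx hk a₁ x.1) := by
      rw [isCh_swapIdx_iff]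
      have := x.2; omega
    have h1 := buildPerm_apply_nch hk hn π₁ a₁ τ₁ _ hx
    have h2 := buildPerm_apply_nch hk hn π₂ a₁ τ₂ _ hx
    rw [h] at h1
    rw [h1] at h2
    have harg : (⟨swapIdx hk a₁ (swapIdx hk a₁ x.1),
        (swapIdx_ge_iff hk a₁ _).mpr hx⟩ : {i : Fin (k*n) // k ≤ (i : ℕ)}) = x :=
      Subtype.ext (swapIdx_invol hk a₁ x.1)
    rw [harg] at h2
    exact Subtype.coe_injective h2
  exact ⟨hπ, rfl, hτ⟩

lemma build_surj (hk : 0 < k) (hn : 0 < n) (σ : Equiv.Perm (Fin (k * n))) (hσ : Valid σ) :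
    ∃ (π : Equiv.Perm (Fin k)) (a : Fin k → Fin n)
      (τ : Equiv.Perm {i : Fin (k * n) // k ≤ (i : ℕ)}), buildPerm hk hn π a τ = σ := by
  classical
  have hkn : k ≤ k * n := Nat.le_mul_of_pos_right k hn
  set emb : Fin k → Fin (k * n) := fun m => ⟨m, lt_of_lt_of_le m.2 hkn⟩ with hemb
  set c : Fin k → Fin k :=
    fun m => ⟨((σ.symm (emb m) : Fin (k*n)) : ℕ) % k, Nat.mod_lt _ hk⟩ with hc
  have hcinj : Function.Injective c := by
    intro m₁ m₂ hm
    have h1 : ((σ (σ.symm (emb m₁)) : Fin (k*n)) : ℕ) < k := by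
      rw [Equiv.apply_symm_apply]; exact m₁.2
    have h2 : ((σ (σ.symm (emb m₂)) : Fin (k*n)) : ℕ) < k := by
      rw [Equiv.apply_symm_apply]; exact m₂.2
    have heq := hσ (σ.symm (emb m₁)) (σ.symm (emb m₂)) (congrArg Fin.val hm) h1 h2
    have := congrArg σ heq
    rw [Equiv.apply_symm_apply, Equiv.apply_symm_apply] at this
    have hv : ((emb m₁ : Fin (k*n)) : ℕ) = ((emb m₂ : Fin (k*n)) : ℕ) := congrArg Fin.val this
    exact Fin.ext hv
  set cE := Equiv.ofBijective c (Finite.injective_iff_bijective.mp hcinj) with hcE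
  set π := cE.symm with hπ
  have hchoose : ∀ r : Fin k, ((σ.symm (emb (π r)) : Fin (k*n)) : ℕ) % k = (r : ℕ) := by
    intro r
    have hcc : c (π r) = r := cE.apply_symm_apply r
    exact congrArg Fin.val hcc
  set a : Fin k → Fin n := fun r => ⟨((σ.symm (emb (π r)) : Fin (k*n)) : ℕ) / k, by
    refine (Nat.div_lt_iff_lt_mul hk).mpr ?_
    rw [Nat.mul_comm n k]
    exact (σ.symm (emb (π r))).2⟩ with ha
  have hkey : ∀ i : Fin (k * n), ((σ i : Fin (k*n)) : ℕ) < k → isCh hk a i := by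
    intro i hi
    set m : Fin k := ⟨((σ i : Fin (k*n)) : ℕ), hi⟩ with hm
    have hembm : emb m = σ i := Fin.ext rfl
    have hsymm : σ.symm (emb m) = i := by rw [hembm, Equiv.symm_apply_apply]
    have hpc : π (c m) = m := cE.symm_apply_apply m
    rw [isCh]
    have hcm : c m = ⟨(i : ℕ) % k, Nat.mod_lt _ hk⟩ := by
      apply Fin.ext
      show ((σ.symm (emb m) : Fin (k*n)) : ℕ) % k = (i : ℕ) % k
      rw [hsymm]
    rw [← hcm]
    show (i : ℕ) / k = ((σ.symm (emb (π (c m))) : Fin (k*n)) : ℕ) / k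
    rw [hpc, hsymm]
  have hkey2 : ∀ i : Fin (k * n), isCh hk a i →
      σ i = emb (π ⟨(i : ℕ) % k, Nat.mod_lt _ hk⟩) := by
    intro i hch
    set r : Fin k := ⟨(i : ℕ) % k, Nat.mod_lt _ hk⟩ with hr
    have h1 : ((σ.symm (emb (π r)) : Fin (k*n)) : ℕ) % k = (i : ℕ) % k := hchoose r
    have h2 : ((σ.symm (emb (π r)) : Fin (k*n)) : ℕ) / k = (i : ℕ) / k := by
      rw [isCh] at hch
      rw [hch]
    have heq : σ.symm (emb (π r)) = i := by
      apply Fin.ext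
      rw [← Nat.mod_add_div ((σ.symm (emb (π r)) : Fin (k*n)) : ℕ) k, h1, h2,
        Nat.mod_add_div]
    rw [← heq, Equiv.apply_symm_apply]
  have hτfun : ∀ x : {i : Fin (k * n) // k ≤ (i : ℕ)},
      k ≤ ((σ (swapIdx hk a x.1) : Fin (k*n)) : ℕ) := by
    intro x
    by_contra hlt
    push_neg at hlt
    have hc1 := hkey _ hlt
    rw [isCh_swapIdx_iff] at hc1
    have := x.2; omega
  have hτinv : ∀ x : {i : Fin (k * n) // k ≤ (i : ℕ)},
      k ≤ ((swapIdx hk a (σ.symm x.1) : Fin (k*n)) : ℕ) := by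
    intro x
    rw [swapIdx_ge_iff]
    intro hch
    have h := hkey2 _ hch
    rw [Equiv.apply_symm_apply] at h
    have hlt : ((x.1 : Fin (k*n)) : ℕ) < k := by rw [h]; exact (π _).2
    have := x.2; omega
  refine ⟨π, a, ⟨fun x => ⟨σ (swapIdx hk a x.1), hτfun x⟩,
    fun x => ⟨swapIdx hk a (σ.symm x.1), hτinv x⟩, ?_, ?_⟩, ?_⟩
  · intro x
    apply Subtype.ext
    dsimp only
    rw [Equiv.symm_apply_apply, swapIdx_invol]
  · intro x
    apply Subtype.ext
    dsimp only
    rw [swapIdx_invol, Equiv.apply_symm_apply]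
  · apply Equiv.ext
    intro i
    by_cases hch : isCh hk a i
    · rw [buildPerm_apply_ch hk hn _ _ _ i hch, hkey2 i hch]
    · rw [buildPerm_apply_nch hk hn _ _ _ i hch]
      simp only [Equiv.coe_fn_mk]
      show σ (swapIdx hk a (swapIdx hk a i)) = σ i
      rw [swapIdx_invol]

end Bij

end ClusterAux

/-- **Cluster factorization of the ℤ_k-parafermion ground state.**
For `N = kn`, under the substitution `φ` sending `X_i ↦ W` for `0 ≤ i ≤ k−1`
(here `W` is realized as the variable `X_0`, which is untouched by `φ` on the
remaining indices) and fixing `X_i` for `k ≤ i ≤ N−1`, the symmetrized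
generalized-(331) polynomial factorizes exactly:
`φ(Sym P) = k! · n^k · (∏_{i=k}^{N−1} (W − X_i)²) · Sym P′`. -/
theorem cluster_factorization (k n N : ℕ) (hk : 1 ≤ k) (hn : 1 ≤ n) (hN : N = k * n) :
    aeval (fun i : Fin N =>
        if (i : ℕ) < k then
          (X (⟨0, by subst hN; exact Nat.mul_pos (by omega) (by omega)⟩ : Fin N) :
            MvPolynomial (Fin N) ℤ)
        else X i)
      (symColourP k N) =
    C ((k.factorial : ℤ) * (n : ℤ) ^ k) *
      (∏ i ∈ Finset.univ.filter (fun i : Fin N => k ≤ (i : ℕ)),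
        (X (⟨0, by subst hN; exact Nat.mul_pos (by omega) (by omega)⟩ : Fin N) - X i) ^ 2) *
      symColourP' k N := by
  subst hN
  have hk' : 0 < k := hk
  have hn' : 0 < n := hn
  classical
  rw [symColourP, map_sum]
  refine Eq.trans (Finset.sum_congr rfl
    (fun σ _ => ClusterAux.aeval_rename_eq_termOf hk' hn' σ)) ?_
  rw [← Finset.sum_filter_add_sum_filter_not Finset.univ ClusterAux.Valid
    (ClusterAux.termOf hk' hn')]
  rw [Finset.sum_eq_zero
    (fun σ hσ => ClusterAux.termOf_eq_zero hk' hn' σ (Finset.mem_filter.mp hσ).2), add_zero]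
  have hbij : ∑ t : Equiv.Perm (Fin k) × (Fin k → Fin n) ×
      Equiv.Perm {i : Fin (k * n) // k ≤ (i : ℕ)},
      ClusterAux.termOf hk' hn' (ClusterAux.buildPerm hk' hn' t.1 t.2.1 t.2.2) =
      ∑ σ ∈ Finset.univ.filter ClusterAux.Valid, ClusterAux.termOf hk' hn' σ := by
    apply Finset.sum_bij (i := fun t _ => ClusterAux.buildPerm hk' hn' t.1 t.2.1 t.2.2)
    · intro t _
      simp only [Finset.mem_filter, Finset.mem_univ, true_and]
      exact ClusterAux.valid_build hk' hn' t.1 t.2.1 t.2.2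
    · intro t₁ _ t₂ _ h
      obtain ⟨h1, h2, h3⟩ := ClusterAux.build_inj hk' hn' _ _ _ _ _ _ h
      exact Prod.ext h1 (Prod.ext h2 h3)
    · intro σ hσ
      simp only [Finset.mem_filter, Finset.mem_univ, true_and] at hσ
      obtain ⟨π, a, τ, h⟩ := ClusterAux.build_surj hk' hn' σ hσ
      exact ⟨(π, a, τ), Finset.mem_univ _, h⟩
    · intro t _
      rfl
  rw [← hbij]
  refine Eq.trans (Finset.sum_congr rfl
    (fun t _ => ClusterAux.termOf_build hk' hn' t.1 t.2.1 t.2.2)) ?_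
  rw [Fintype.sum_prod_type]
  simp only [Fintype.sum_prod_type]
  rw [Finset.sum_const, Finset.sum_const, Finset.card_univ, Finset.card_univ,
    Fintype.card_perm, Fintype.card_fin, Fintype.card_fun, Fintype.card_fin,
    smul_smul, ← Finset.mul_sum, ← symColourP', nsmul_eq_mul,
    ← map_natCast (C : ℤ →+* MvPolynomial (Fin (k * n)) ℤ), ← mul_assoc]
  have hC : ((k.factorial * n ^ k : ℕ) : ℤ) = (k.factorial : ℤ) * (n : ℤ) ^ k := by
    push_cast; ring
  rw [Fintype.card_fin, hC]
  rfl
end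

section
/- Let δ = (1+√5)/2 (so δ² = δ + 1 and 3 − δ = (5−√5)/2 > 0). Index the set I = {(m, μ) : m ∈ {−2,−1,0,1,2}, μ ∈ {0,1}} (10 elements) and define the complex matrix S on I×I by S_{(m,μ),(m′,μ′)} = (√(3−δ)/5) · (−1)^{μμ′ + mμ′ + m′μ} · exp(iπ m m′/5) · δ^{P(μ+m+μ′+m′)}, where P(a) = 0 if a is even and P(a) = 1 if a is odd. Then S is symmetric and unitary (S · S† = I). (S is the modular S-matrix of the ten sectors of the ℤ_3-parafermion Hall state at ν = 3/5.) -/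
/-!
Put `Q = m + 5μ` and `ζ = e^{iπ/5}`. Since `(-1)^n = ζ^{5n}`, `ζ^{10} = 1` and `Q ≡ m + μ (mod 2)`,
the entries become `S_{pq} = c · ζ^{Q_p Q_q} · δ^{P(Q_p + Q_q)}` with `c = √(3-δ)/5`, and `Q` takes
each value `-2, …, 7` once. In `(S S†)_{pq}` with `d = Q_p - Q_q`, the two summands with the same
`m` cancel when `d` is odd and add up to `c² (1 + δ²) ζ^{d m}` when `d` is even. The remaining sum
over `m` is a geometric sum of fifth roots of unity, equal to `5` if `10 ∣ d`, i.e. `p = q`, and to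
`0` otherwise. Finally `5 c² (1 + δ²) = (3 - δ)(2 + δ) / 5 = 1` because `δ² = δ + 1`.
-/

open Matrix Complex

/-- The golden ratio `δ = (1+√5)/2 = 2cos(π/5)`. -/
noncomputable def goldenδ : ℝ := (1 + Real.sqrt 5) / 2

/-- The electric-charge label `m ∈ {−2,−1,0,1,2}` of a sector index. -/
def mVal (p : Fin 5 × Fin 2) : ℤ := (p.1 : ℕ) - 2

/-- The neutral label `μ ∈ {0,1}` of a sector index. -/
def μVal (p : Fin 5 × Fin 2) : ℤ := (p.2 : ℕ)

/-- The parity `P(a)`: `0` if `a` is even, `1` if `a` is odd. -/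
def parP (a : ℤ) : ℕ := if Even a then 0 else 1

/-- The modular S-matrix of the ten sectors `(m, μ)`, `m ∈ {0,±1,±2}`,
`μ ∈ {0,1}`, of the ℤ_3-parafermion Hall state at `ν = 3/5`:
`S_{(m,μ),(m′,μ′)} = (√(3−δ)/5) · (−1)^{μμ′+mμ′+m′μ} · e^{iπmm′/5} ·
δ^{P(μ+m+μ′+m′)}`. -/
noncomputable def Smat : Matrix (Fin 5 × Fin 2) (Fin 5 × Fin 2) ℂ :=
  Matrix.of fun p q =>
    ((Real.sqrt (3 - goldenδ) / 5 : ℝ) : ℂ) *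
      (-1 : ℂ) ^ (μVal p * μVal q + mVal p * μVal q + mVal q * μVal p) *
      Complex.exp (Complex.I * (Real.pi : ℂ) * (mVal p : ℂ) * (mVal q : ℂ) / 5) *
      ((goldenδ : ℝ) : ℂ) ^ parP (μVal p + mVal p + μVal q + mVal q)

open scoped Real

theorem sum_fin_zpow_add_eq_zero {K : Type*} [Field K] {ω : K} {n : ℕ} (h : ω ^ n = 1)
    (hω : ω ≠ 1) (a : ℤ) : ∑ k : Fin n, ω ^ ((k : ℤ) + a) = 0 := by
  rcases Nat.eq_zero_or_pos n with rfl | hn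
  · simp
  have hω0 : ω ≠ 0 := by rintro rfl; simp [hn.ne'] at h
  simp only [zpow_add₀ hω0, zpow_natCast, ← Finset.sum_mul]
  rw [Fin.sum_univ_eq_sum_range (ω ^ ·), geom_sum_eq hω, h, sub_self, zero_div, zero_mul]

lemma parP_eq_of_even_sub {a b : ℤ} (h : Even (a - b)) : parP a = parP b := by
  simp [parP, Int.even_sub.mp h]

theorem parP_fiber_sum {K : Type*} [Field K] (x : K) (d y : ℤ) :
    x ^ (parP (y + d) + parP y) + (-1) ^ d * x ^ (parP (y + d + 1) + parP (y + 1)) =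
      if Even d then 1 + x ^ 2 else 0 := by
  have hsign : (-1 : K) ^ d = if Even d then 1 else -1 := by
    split_ifs with hd
    exacts [hd.neg_one_zpow, (Int.not_even_iff_odd.mp hd).neg_one_zpow]
  rw [hsign]
  by_cases hd : Even d <;> by_cases hy : Even y <;>
    simp only [parP, Int.even_add, Int.not_even_one, hd, hy, iff_true, iff_false, not_true,
      if_true, if_false] <;> ring

noncomputable def ζ₁₀ : ℂ := cexp (π * I / 5)

lemma isPrimitiveRoot_ζ₁₀ : IsPrimitiveRoot ζ₁₀ 10 := by
  convert Complex.isPrimitiveRoot_exp 10 (by norm_num) using 2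
  rw [ζ₁₀]
  push_cast
  ring_nf

lemma ζ₁₀_ne_zero : ζ₁₀ ≠ 0 := exp_ne_zero _

lemma ζ₁₀_pow_five : ζ₁₀ ^ 5 = -1 := by
  rw [ζ₁₀, ← exp_nat_mul, ← exp_pi_mul_I]
  push_cast
  ring_nf

lemma neg_one_zpow_eq_ζ₁₀_zpow (n : ℤ) : (-1 : ℂ) ^ n = ζ₁₀ ^ (5 * n) := by
  rw [_root_.zpow_mul, zpow_ofNat, ζ₁₀_pow_five]

lemma star_ζ₁₀ : star ζ₁₀ = ζ₁₀⁻¹ := by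
  rw [ζ₁₀, ← exp_neg, star_def, ← exp_conj, map_div₀, map_mul, conj_ofReal, conj_I,
    map_ofNat]
  congr 1
  ring

lemma exp_int_mul_int_eq_ζ₁₀_zpow (a b : ℤ) :
    cexp (I * π * a * b / 5) = ζ₁₀ ^ (a * b) := by
  rw [ζ₁₀, ← exp_int_mul]
  push_cast
  ring_nf

lemma ζ₁₀_zpow_eq_zpow {a b : ℤ} (h : (10 : ℤ) ∣ a - b) : ζ₁₀ ^ a = ζ₁₀ ^ b := by
  rw [← sub_add_cancel a b, zpow_add₀ ζ₁₀_ne_zero,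
    (isPrimitiveRoot_ζ₁₀.zpow_eq_one_iff_dvd _).2 h, one_mul]

lemma sum_ζ₁₀_zpow_of_even {d : ℤ} (hd : Even d) :
    ∑ k : Fin 5, ζ₁₀ ^ (d * ((k : ℤ) - 2)) = if (10 : ℤ) ∣ d then 5 else 0 := by
  simp only [_root_.zpow_mul, sub_eq_add_neg]
  split_ifs with h10
  · simp [(isPrimitiveRoot_ζ₁₀.zpow_eq_one_iff_dvd d).2 h10]
  have hpow : (ζ₁₀ ^ d) ^ 5 = 1 := by
    have := neg_one_zpow_eq_ζ₁₀_zpow d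
    rw [hd.neg_one_zpow, mul_comm, _root_.zpow_mul] at this
    exact_mod_cast this.symm
  exact sum_fin_zpow_add_eq_zero hpow (mt (isPrimitiveRoot_ζ₁₀.zpow_eq_one_iff_dvd d).1 h10) _

def charge (p : Fin 5 × Fin 2) : ℤ := mVal p + 5 * μVal p

lemma ten_dvd_charge_sub_iff {p q : Fin 5 × Fin 2} : (10 : ℤ) ∣ charge p - charge q ↔ p = q := by
  refine ⟨fun h => ?_, fun h => by simp [h]⟩
  obtain ⟨⟨m, hm⟩, ⟨μ, hμ⟩⟩ := p
  obtain ⟨⟨m', hm'⟩, ⟨μ', hμ'⟩⟩ := q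
  simp only [charge, mVal, μVal] at h
  ext <;> simp only <;> omega

lemma Smat_apply_charge (p q : Fin 5 × Fin 2) :
    Smat p q = ((Real.sqrt (3 - goldenδ) / 5 : ℝ) : ℂ) * ζ₁₀ ^ (charge p * charge q) *
      (goldenδ : ℂ) ^ parP (charge p + charge q) := by
  simp only [Smat, of_apply, neg_one_zpow_eq_ζ₁₀_zpow, exp_int_mul_int_eq_ζ₁₀_zpow]
  rw [mul_assoc ((Real.sqrt (3 - goldenδ) / 5 : ℝ) : ℂ), ← zpow_add₀ ζ₁₀_ne_zero,
    ζ₁₀_zpow_eq_zpow (b := charge p * charge q) ⟨-2 * μVal p * μVal q, by simp only [charge]; ring⟩,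
    parP_eq_of_even_sub (b := charge p + charge q)
      ⟨-2 * (μVal p + μVal q), by simp only [charge]; ring⟩]

lemma Smat_mul_star_apply (p q r : Fin 5 × Fin 2) :
    Smat p r * star (Smat q r) =
      ((Real.sqrt (3 - goldenδ) / 5 : ℝ) : ℂ) ^ 2 * ζ₁₀ ^ ((charge p - charge q) * charge r) *
        (goldenδ : ℂ) ^ (parP (charge p + charge r) + parP (charge q + charge r)) := by
  simp only [Smat_apply_charge, star_mul', star_zpow₀, star_pow, star_ζ₁₀, Complex.star_def,
    conj_ofReal, _root_.inv_zpow', sub_mul, zpow_sub₀ ζ₁₀_ne_zero, pow_add]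
  rw [_root_.zpow_neg]
  ring

lemma sum_neutral_Smat_mul_star (p q : Fin 5 × Fin 2) (k : Fin 5) :
    ∑ ν : Fin 2, Smat p (k, ν) * star (Smat q (k, ν)) =
      ((Real.sqrt (3 - goldenδ) / 5 : ℝ) : ℂ) ^ 2 *
        ζ₁₀ ^ ((charge p - charge q) * ((k : ℤ) - 2)) *
        if Even (charge p - charge q) then 1 + (goldenδ : ℂ) ^ 2 else 0 := by
  have hc0 : charge (k, 0) = (k : ℤ) - 2 := by simp [charge, mVal, μVal]
  have hc1 : charge (k, 1) = (k : ℤ) - 2 + 5 := by simp [charge, mVal, μVal]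
  have hζ : ζ₁₀ ^ ((charge p - charge q) * ((k : ℤ) - 2 + 5)) =
      ζ₁₀ ^ ((charge p - charge q) * ((k : ℤ) - 2)) * (-1) ^ (charge p - charge q) := by
    rw [mul_add, zpow_add₀ ζ₁₀_ne_zero, neg_one_zpow_eq_ζ₁₀_zpow, mul_comm 5]
  have hp : charge p + ((k : ℤ) - 2) = charge q + ((k : ℤ) - 2) + (charge p - charge q) := by
    ring
  have hp5 : parP (charge p + ((k : ℤ) - 2 + 5)) =
      parP (charge q + ((k : ℤ) - 2) + (charge p - charge q) + 1) :=
    parP_eq_of_even_sub ⟨2, by ring⟩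
  have hq5 : parP (charge q + ((k : ℤ) - 2 + 5)) = parP (charge q + ((k : ℤ) - 2) + 1) :=
    parP_eq_of_even_sub ⟨2, by ring⟩
  rw [Fin.sum_univ_two, Smat_mul_star_apply, Smat_mul_star_apply, hc0, hc1, hζ, hp, hp5, hq5,
    ← parP_fiber_sum]
  ring

lemma Smat_mul_conjTranspose_apply (p q : Fin 5 × Fin 2) :
    (Smat * Smatᴴ) p q = ((Real.sqrt (3 - goldenδ) / 5 : ℝ) : ℂ) ^ 2 *
      (if Even (charge p - charge q) then 1 + (goldenδ : ℂ) ^ 2 else 0) *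
      ∑ k : Fin 5, ζ₁₀ ^ ((charge p - charge q) * ((k : ℤ) - 2)) := by
  simp only [mul_apply, conjTranspose_apply, Fintype.sum_prod_type, sum_neutral_Smat_mul_star,
    Finset.mul_sum]
  exact Finset.sum_congr rfl fun _ _ => by ring

lemma sqrt_three_sub_goldenδ_div_five_sq_mul :
    ((Real.sqrt (3 - goldenδ) / 5 : ℝ) : ℂ) ^ 2 * (1 + (goldenδ : ℂ) ^ 2) * 5 = 1 := by
  have hδ : goldenδ = Real.goldenRatio := rfl
  have hsq : Real.sqrt (3 - goldenδ) ^ 2 = 3 - goldenδ :=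
    Real.sq_sqrt (by linarith [Real.goldenRatio_lt_two])
  have key : (Real.sqrt (3 - goldenδ) / 5) ^ 2 * (1 + goldenδ ^ 2) * 5 = 1 := by
    rw [div_pow, hsq, hδ, Real.goldenRatio_sq]
    linear_combination (-1 / 5 : ℝ) * Real.goldenRatio_sq
  exact_mod_cast key

theorem Smat_transpose : Smatᵀ = Smat := by
  ext p q
  rw [transpose_apply, Smat_apply_charge, Smat_apply_charge, mul_comm (charge q),
    add_comm (charge q)]

theorem Smat_mul_conjTranspose : Smat * Smatᴴ = 1 := by
  ext p q
  rw [Smat_mul_conjTranspose_apply, one_apply]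
  by_cases hd : Even (charge p - charge q)
  · rw [if_pos hd, sum_ζ₁₀_zpow_of_even hd]
    simp only [ten_dvd_charge_sub_iff]
    split_ifs
    · rw [sqrt_three_sub_goldenδ_div_five_sq_mul]
    · rw [mul_zero]
  · rw [if_neg hd, if_neg (by rintro rfl; exact hd (by simp)), mul_zero, zero_mul]

/-- **The modular S-matrix of the ℤ_3-parafermion Hall state is symmetric and
unitary:** `Sᵀ = S` and `S·S† = 1`. -/
theorem Smat_symmetric_unitary : Smatᵀ = Smat ∧ Smat * Smat.conjTranspose = 1 :=
  ⟨Smat_transpose, Smat_mul_conjTranspose⟩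
end
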